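/- arXiv:1002.1706 — 4 statements merged into one kernel-verified Lean document; each statement's English description precedes it below -/
import Mathlib

section
/- Let α_1,…,α_l be pairwise distinct points of the open unit disc 𝔻, let A_1 = λ_1 I, …, A_k = λ_k I ∈ Ω_2 be scalar matrices, let A_{k+1},…,A_l ∈ Ω_2 be non-scalar matrices, and let φ = (φ_1,φ_2) : 𝔻 → 𝔾_2 be holomorphic with φ(α_j) = σ(A_j) for j = 1,…,l. Then there exists a holomorphic map ψ : 𝔻 → Ω_2 satisfying σ∘ψ = φ and ψ(α_j) = A_j for j = 1,…,l if and only if φ_2′(α_j) = λ_j φ_1′(α_j) for j = 1,…,k. -/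
open Metric Matrix Polynomial Set Filter

noncomputable section

/-- The open unit disc in `ℂ`. -/
def unitDisc : Set ℂ := Metric.ball 0 1

/-- The spectral ball `Ω_n`: matrices whose spectral radius is `< 1`, i.e. all
eigenvalues have modulus `< 1`. -/
def SpectralBall (n : ℕ) : Set (Matrix (Fin n) (Fin n) ℂ) :=
  {A | ∀ z ∈ spectrum ℂ A, ‖z‖ < 1}

/-- `σ(A) = (σ_1(A), …, σ_n(A))`, the signed coefficients of the characteristic
polynomial: `det (t•I − A) = ∑_{j=0}^n (−1)^j σ_j(A) t^(n−j)`.  Index `i : Fin n`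
corresponds to `σ_{i+1}`. -/
def sigmaCoeff (n : ℕ) (A : Matrix (Fin n) (Fin n) ℂ) : Fin n → ℂ :=
  fun i => (-1 : ℂ) ^ ((i : ℕ) + 1) * A.charpoly.coeff (n - ((i : ℕ) + 1))

/-- The symmetrized polydisc `𝔾_n = σ(Ω_n)`. -/
def SymPolydisc (n : ℕ) : Set (Fin n → ℂ) :=
  sigmaCoeff n '' SpectralBall n

/-- A matrix is scalar if it is `c • I` for some `c : ℂ`. -/
def IsScalarMatrix {n : ℕ} (A : Matrix (Fin n) (Fin n) ℂ) : Prop :=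
  ∃ c : ℂ, A = c • (1 : Matrix (Fin n) (Fin n) ℂ)

/-- A matrix is cyclic (non-derogatory) if it admits a cyclic vector `v`, i.e.
`v, A v, …, A^(n−1) v` span `ℂ^n`. -/
def IsCyclicMatrix {n : ℕ} (A : Matrix (Fin n) (Fin n) ℂ) : Prop :=
  ∃ v : Fin n → ℂ,
    Submodule.span ℂ (Set.range fun i : Fin n => (A ^ (i : ℕ)).mulVec v) = ⊤

/-- A matrix-valued map is holomorphic on the unit disc if each entry is. -/
def MatHolo {n : ℕ} (ψ : ℂ → Matrix (Fin n) (Fin n) ℂ) : Prop :=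
  ∀ i j : Fin n, DifferentiableOn ℂ (fun z => ψ z i j) unitDisc

/-- A matrix-valued map is bounded on the unit disc. -/
def MatBounded {n : ℕ} (ψ : ℂ → Matrix (Fin n) (Fin n) ℂ) : Prop :=
  ∃ C : ℝ, ∀ z ∈ unitDisc, ∀ i j : Fin n, ‖ψ z i j‖ ≤ C

/-- The spectral radius of a matrix. -/
def specRad (n : ℕ) (A : Matrix (Fin n) (Fin n) ℂ) : ℝ :=
  sSup ((fun z => ‖z‖) '' spectrum ℂ A)

/-- The Lempert function of the spectral ball `Ω_n`. -/
def lempertOmega (n : ℕ) (A B : Matrix (Fin n) (Fin n) ℂ) : ℝ :=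
  sInf {r : ℝ | ∃ α : ℂ, α ∈ unitDisc ∧ ‖α‖ = r ∧
    ∃ ψ : ℂ → Matrix (Fin n) (Fin n) ℂ, MatHolo ψ ∧
      Set.MapsTo ψ unitDisc (SpectralBall n) ∧ ψ 0 = A ∧ ψ α = B}

/-- The Kobayashi–Royden pseudometric of the spectral ball `Ω_n`. -/
def kobayashiOmega (n : ℕ) (A B : Matrix (Fin n) (Fin n) ℂ) : ℝ :=
  sInf {γ : ℝ | 0 ≤ γ ∧ ∃ ψ : ℂ → Matrix (Fin n) (Fin n) ℂ, MatHolo ψ ∧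
    Set.MapsTo ψ unitDisc (SpectralBall n) ∧ ψ 0 = A ∧
    ∀ i j : Fin n, (γ : ℂ) * deriv (fun z => ψ z i j) 0 = B i j}

/-! ### Auxiliary lemmas -/

open scoped Topology

theorem aux_charpoly_fin_two (M : Matrix (Fin 2) (Fin 2) ℂ) :
    M.charpoly = X^2 - C M.trace * X + C M.det := by
  rw [Matrix.charpoly, Matrix.det_fin_two]
  simp [charmatrix_apply_eq, charmatrix_apply_ne, trace_fin_two, det_fin_two]
  ring

theorem aux_sigmaCoeff_two (M : Matrix (Fin 2) (Fin 2) ℂ) :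
    sigmaCoeff 2 M = ![M.trace, M.det] := by
  funext i
  fin_cases i <;>
    simp [sigmaCoeff, aux_charpoly_fin_two, coeff_sub, coeff_add, coeff_X_pow, coeff_C_mul,
      coeff_C, coeff_X]

theorem aux_mem_spectrum (M : Matrix (Fin 2) (Fin 2) ℂ) (z : ℂ) :
    z ∈ spectrum ℂ M ↔ M.charpoly.eval z = 0 := by
  rw [spectrum.mem_iff, Matrix.isUnit_iff_isUnit_det, isUnit_iff_ne_zero, not_ne_iff,
    aux_charpoly_fin_two]
  have h : (algebraMap ℂ (Matrix (Fin 2) (Fin 2) ℂ)) z - M =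
      !![z - M 0 0, -M 0 1; -M 1 0, z - M 1 1] := by
    ext i j
    fin_cases i <;> fin_cases j <;>
      simp [Matrix.algebraMap_matrix_apply, Matrix.sub_apply]
  rw [h, Matrix.det_fin_two_of]
  simp [Matrix.det_fin_two, Matrix.trace_fin_two]
  constructor <;> intro h' <;> linear_combination h'

theorem aux_conj_companion (M : Matrix (Fin 2) (Fin 2) ℂ) (h : ¬ IsScalarMatrix M) :
    ∃ P : Matrix (Fin 2) (Fin 2) ℂ, IsUnit P.det ∧
      M * P = P * !![0, -M.det; 1, M.trace] := by
  by_cases hc : M 1 0 ≠ 0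
  · refine ⟨!![1, M 0 0; 0, M 1 0], ?_, ?_⟩
    · rw [Matrix.det_fin_two_of]; simpa using hc
    · ext i j
      fin_cases i <;> fin_cases j <;>
        simp [Matrix.mul_apply, Fin.sum_univ_two, det_fin_two, trace_fin_two] <;> ring
  push_neg at hc
  by_cases hb : M 0 1 ≠ 0
  · refine ⟨!![0, M 0 1; 1, M 1 1], ?_, ?_⟩
    · rw [Matrix.det_fin_two_of]; simpa using hb
    · ext i j
      fin_cases i <;> fin_cases j <;>
        simp [Matrix.mul_apply, Fin.sum_univ_two, det_fin_two, trace_fin_two] <;> ring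
  push_neg at hb
  have hd : M 0 0 ≠ M 1 1 := by
    intro he
    exact h ⟨M 0 0, by ext i j; fin_cases i <;> fin_cases j <;>
      simp [Matrix.one_apply, hb, hc, he]⟩
  refine ⟨!![1, M 0 0; 1, M 1 1], ?_, ?_⟩
  · rw [Matrix.det_fin_two_of]
    simpa [sub_ne_zero] using (Ne.symm hd)
  · ext i j
    fin_cases i <;> fin_cases j <;>
      simp [Matrix.mul_apply, Fin.sum_univ_two, det_fin_two, trace_fin_two, hb, hc] <;> ring

theorem aux_similar (M N : Matrix (Fin 2) (Fin 2) ℂ)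
    (hM : ¬ IsScalarMatrix M) (hN : ¬ IsScalarMatrix N)
    (ht : M.trace = N.trace) (hd : M.det = N.det) :
    ∃ G : Matrix (Fin 2) (Fin 2) ℂ, IsUnit G.det ∧ M * G = G * N := by
  obtain ⟨P₁, h₁, e₁⟩ := aux_conj_companion M hM
  obtain ⟨P₂, h₂, e₂⟩ := aux_conj_companion N hN
  rw [← ht, ← hd] at e₂
  refine ⟨P₁ * P₂⁻¹, ?_, ?_⟩
  · rw [Matrix.det_mul]
    exact h₁.mul (Matrix.isUnit_nonsing_inv_det _ h₂)
  · have key : !![0, -M.det; 1, M.trace] * P₂⁻¹ = P₂⁻¹ * N := by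
      have h3 := congrArg (fun X => P₂⁻¹ * X * P₂⁻¹) e₂
      try simp only at h3
      rw [← Matrix.mul_assoc, ← Matrix.mul_assoc] at h3
      rw [Matrix.nonsing_inv_mul _ h₂, Matrix.one_mul] at h3
      rw [Matrix.mul_assoc (P₂⁻¹ * N), Matrix.mul_nonsing_inv _ h₂, Matrix.mul_one] at h3
      exact h3.symm
    calc M * (P₁ * P₂⁻¹) = (M * P₁) * P₂⁻¹ := by rw [Matrix.mul_assoc]
      _ = P₁ * (!![0, -M.det; 1, M.trace] * P₂⁻¹) := by rw [e₁, Matrix.mul_assoc]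
      _ = P₁ * (P₂⁻¹ * N) := by rw [key]
      _ = (P₁ * P₂⁻¹) * N := by rw [Matrix.mul_assoc]

theorem aux_ULUD (G : Matrix (Fin 2) (Fin 2) ℂ) (h : IsUnit G.det) :
    ∃ a b c d e : ℂ, d ≠ 0 ∧ e ≠ 0 ∧
      G = !![1, a; 0, 1] * !![1, 0; b, 1] * !![1, c; 0, 1] * !![d, 0; 0, e] := by
  have hdet : G.det ≠ 0 := h.ne_zero
  rw [Matrix.det_fin_two] at hdet
  by_cases hg : G 1 0 = 0
  · have h11 : G 1 1 ≠ 0 := fun he => hdet (by rw [hg, he]; ring)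
    have h00 : G 0 0 ≠ 0 := fun he => hdet (by rw [hg, he]; ring)
    refine ⟨G 0 1 / G 1 1, 0, 0, G 0 0, G 1 1, h00, h11, ?_⟩
    ext i j
    fin_cases i <;> fin_cases j <;>
      simp [Matrix.mul_apply, Fin.sum_univ_two, hg] <;> field_simp
  · have hdet' : G 0 0 * G 1 1 - G 0 1 * G 1 0 ≠ 0 := hdet
    refine ⟨G 0 0 / G 1 0 - 1, 1, G 1 1 * G 1 0 / (G 0 0 * G 1 1 - G 0 1 * G 1 0) - 1,
      G 1 0, (G 0 0 * G 1 1 - G 0 1 * G 1 0) / G 1 0, hg, div_ne_zero hdet' hg, ?_⟩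
    ext i j
    fin_cases i <;> fin_cases j <;>
      simp [Matrix.mul_apply, Fin.sum_univ_two] <;> field_simp <;> (try ring) <;>
      (have h2 : G 1 1 * G 0 0 - G 1 0 * G 0 1 ≠ 0 := fun h0 => hdet' (by linear_combination h0)
       field_simp; ring)

theorem aux_div_lemma (S : Finset ℂ) (hS : ∀ a ∈ S, a ∈ unitDisc) (F : ℂ → ℂ)
    (hF : DifferentiableOn ℂ F unitDisc) (h0 : ∀ a ∈ S, F a = 0)
    (h1 : ∀ a ∈ S, deriv F a = 0) :
    ∃ u : ℂ → ℂ, DifferentiableOn ℂ u unitDisc ∧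
      (∀ z, u z * ∏ a ∈ S, (z - a) = F z) ∧ ∀ a ∈ S, u a = 0 := by
  classical
  induction S using Finset.induction_on with
  | empty => exact ⟨F, hF, fun z => by simp, fun a ha => absurd ha (Finset.notMem_empty a)⟩
  | @insert a S ha IH =>
    obtain ⟨u, hu, hprod, hz⟩ := IH (fun b hb => hS b (Finset.mem_insert_of_mem hb))
      (fun b hb => h0 b (Finset.mem_insert_of_mem hb))
      (fun b hb => h1 b (Finset.mem_insert_of_mem hb))
    have haD : a ∈ unitDisc := hS a (Finset.mem_insert_self a S)
    have hPa : (∏ b ∈ S, (a - b)) ≠ 0 := by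
      rw [Finset.prod_ne_zero_iff]
      exact fun b hb => sub_ne_zero.2 fun he => ha (he ▸ hb)
    have hua : u a = 0 := by
      have h4 := hprod a
      rw [h0 a (Finset.mem_insert_self a S)] at h4
      exact (mul_eq_zero.1 h4).resolve_right hPa
    have hud : deriv u a = 0 := by
      have hPdiff : DifferentiableAt ℂ (fun z => ∏ b ∈ S, (z - b)) a :=
        DifferentiableAt.fun_finsetProd (fun i _ => differentiableAt_id.sub_const _)
      have huda : DifferentiableAt ℂ u a := hu.differentiableAt (isOpen_ball.mem_nhds haD)
      have hFfun : F = fun z => u z * ∏ b ∈ S, (z - b) := funext fun z => (hprod z).symm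
      have h5 : deriv F a = deriv u a * ∏ b ∈ S, (a - b) +
          u a * deriv (fun z => ∏ b ∈ S, (z - b)) a := by
        rw [hFfun]; exact deriv_mul huda hPdiff
      rw [h1 a (Finset.mem_insert_self a S), hua, zero_mul, add_zero] at h5
      exact (mul_eq_zero.1 h5.symm).resolve_right hPa
    refine ⟨dslope u a, ?_, ?_, ?_⟩
    · intro z hzD
      rcases eq_or_ne z a with rfl | hne
      · obtain ⟨p, r, hp⟩ := hu.analyticAt (isOpen_ball.mem_nhds haD)
        exact ((HasFPowerSeriesAt.has_fpower_series_dslope_fslope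
          ⟨r, hp⟩).differentiableAt).differentiableWithinAt
      · exact (differentiableWithinAt_dslope_of_ne hne).2 (hu z hzD)
    · intro z
      rw [Finset.prod_insert ha, ← mul_assoc]
      have h2 : dslope u a z * (z - a) = u z - u a := by
        have h3 := sub_smul_dslope u a z
        rw [smul_eq_mul] at h3
        rw [mul_comm]
        exact h3
      rw [h2, hua, sub_zero, hprod z]
    · intro b hb
      rcases Finset.mem_insert.1 hb with rfl | hb'
      · rw [dslope_same]; exact hud
      · have hne : b ≠ a := fun he => ha (he ▸ hb')
        rw [dslope_of_ne u hne, slope_def_field, hz b hb', hua]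
        simp

theorem aux_matHolo_mul {f g : ℂ → Matrix (Fin 2) (Fin 2) ℂ}
    (hf : MatHolo f) (hg : MatHolo g) : MatHolo (fun z => f z * g z) := by
  intro i j
  have h : (fun z => (f z * g z) i j) =
      fun z => f z i 0 * g z 0 j + f z i 1 * g z 1 j := by
    funext z
    rw [Matrix.mul_apply, Fin.sum_univ_two]
  rw [h]
  exact ((hf i 0).mul (hg 0 j)).add ((hf i 1).mul (hg 1 j))

theorem aux_matHolo_of (f00 f01 f10 f11 : ℂ → ℂ)
    (h00 : DifferentiableOn ℂ f00 unitDisc) (h01 : DifferentiableOn ℂ f01 unitDisc)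
    (h10 : DifferentiableOn ℂ f10 unitDisc) (h11 : DifferentiableOn ℂ f11 unitDisc) :
    MatHolo (fun z => !![f00 z, f01 z; f10 z, f11 z]) := by
  intro i j
  fin_cases i <;> fin_cases j
  · simpa using h00
  · simpa using h01
  · simpa using h10
  · simpa using h11

theorem aux_conj_trace (Qm M Qim : Matrix (Fin 2) (Fin 2) ℂ) (h : Qim * Qm = 1) :
    (Qm * M * Qim).trace = M.trace := by
  rw [Matrix.trace_mul_cycle (A := Qm) (B := M) (C := Qim), h, Matrix.one_mul]

theorem aux_conj_det (Qm M Qim : Matrix (Fin 2) (Fin 2) ℂ) (h : Qm * Qim = 1) :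
    (Qm * M * Qim).det = M.det := by
  have h1 : Qm.det * Qim.det = 1 := by rw [← Matrix.det_mul, h, Matrix.det_one]
  rw [Matrix.det_mul, Matrix.det_mul]
  calc Qm.det * M.det * Qim.det = M.det * (Qm.det * Qim.det) := by ring
    _ = M.det := by rw [h1, mul_one]

set_option maxHeartbeats 1600000 in
/-- Proposition 1: reduction of the spectral Nevanlinna–Pick
problem from `Ω_2` to the symmetrized bidisc `𝔾_2`. -/
theorem stmt_0 (k l : ℕ) (hkl : k ≤ l)
    (α : Fin l → ℂ) (hαinj : Function.Injective α) (hαD : ∀ j, α j ∈ unitDisc)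
    (A : Fin l → Matrix (Fin 2) (Fin 2) ℂ) (lam : Fin l → ℂ)
    (hA : ∀ j, A j ∈ SpectralBall 2)
    (hscal : ∀ j : Fin l, (j : ℕ) < k → A j = lam j • (1 : Matrix (Fin 2) (Fin 2) ℂ))
    (hnonscal : ∀ j : Fin l, k ≤ (j : ℕ) → ¬ IsScalarMatrix (A j))
    (φ : ℂ → Fin 2 → ℂ) (hφ : DifferentiableOn ℂ φ unitDisc)
    (hφmaps : Set.MapsTo φ unitDisc (SymPolydisc 2))
    (hφα : ∀ j, φ (α j) = sigmaCoeff 2 (A j)) :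
    (∃ ψ : ℂ → Matrix (Fin 2) (Fin 2) ℂ, MatHolo ψ ∧
        Set.MapsTo ψ unitDisc (SpectralBall 2) ∧
        (∀ z ∈ unitDisc, sigmaCoeff 2 (ψ z) = φ z) ∧
        (∀ j, ψ (α j) = A j)) ↔
      (∀ j : Fin l, (j : ℕ) < k →
        deriv (fun z => φ z 1) (α j) = lam j * deriv (fun z => φ z 0) (α j)) := by
  classical
  constructor
  · rintro ⟨ψ, hψ, _hmaps, hσ, hval⟩ j hj
    have hnb : unitDisc ∈ 𝓝 (α j) := isOpen_ball.mem_nhds (hαD j)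
    have hD : ∀ i i' : Fin 2, DifferentiableAt ℂ (fun z => ψ z i i') (α j) :=
      fun i i' => (hψ i i').differentiableAt hnb
    have hAj : ψ (α j) = lam j • (1 : Matrix (Fin 2) (Fin 2) ℂ) := by
      rw [hval j, hscal j hj]
    have e00 : ψ (α j) 0 0 = lam j := by rw [hAj]; simp [Matrix.smul_apply, Matrix.one_apply]
    have e11 : ψ (α j) 1 1 = lam j := by rw [hAj]; simp [Matrix.smul_apply, Matrix.one_apply]
    have e01 : ψ (α j) 0 1 = 0 := by rw [hAj]; simp [Matrix.smul_apply, Matrix.one_apply]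
    have e10 : ψ (α j) 1 0 = 0 := by rw [hAj]; simp [Matrix.smul_apply, Matrix.one_apply]
    have h1 : deriv (fun z => φ z 1) (α j) =
        deriv (fun z => ψ z 0 0 * ψ z 1 1 - ψ z 0 1 * ψ z 1 0) (α j) := by
      apply Filter.EventuallyEq.deriv_eq
      filter_upwards [hnb] with z hz
      rw [← hσ z hz, aux_sigmaCoeff_two, ← Matrix.det_fin_two]
      simp
    have h0 : deriv (fun z => φ z 0) (α j) =
        deriv (fun z => ψ z 0 0 + ψ z 1 1) (α j) := by
      apply Filter.EventuallyEq.deriv_eq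
      filter_upwards [hnb] with z hz
      rw [← hσ z hz, aux_sigmaCoeff_two, ← Matrix.trace_fin_two]
      simp
    rw [h1, h0]
    rw [deriv_fun_sub ((hD 0 0).fun_mul (hD 1 1)) ((hD 0 1).fun_mul (hD 1 0)),
      deriv_fun_mul (hD 0 0) (hD 1 1), deriv_fun_mul (hD 0 1) (hD 1 0),
      deriv_fun_add (hD 0 0) (hD 1 1), e00, e11, e01, e10]
    ring
  · intro hder
    -- components of φ are holomorphic
    have hs : DifferentiableOn ℂ (fun z => φ z 0) unitDisc :=
      (ContinuousLinearMap.proj (R := ℂ) (φ := fun _ : Fin 2 => ℂ)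
        (0 : Fin 2)).differentiable.comp_differentiableOn hφ
    have hp : DifferentiableOn ℂ (fun z => φ z 1) unitDisc :=
      (ContinuousLinearMap.proj (R := ℂ) (φ := fun _ : Fin 2 => ℂ)
        (1 : Fin 2)).differentiable.comp_differentiableOn hφ
    -- values of components at the nodes
    have hφ0 : ∀ j, φ (α j) 0 = (A j).trace := fun j => by
      rw [hφα j, aux_sigmaCoeff_two]; simp
    have hφ1 : ∀ j, φ (α j) 1 = (A j).det := fun j => by
      rw [hφα j, aux_sigmaCoeff_two]; simp
    have htr : ∀ j : Fin l, (j : ℕ) < k → φ (α j) 0 = 2 * lam j := by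
      intro j hj
      rw [hφ0 j, hscal j hj, Matrix.trace_smul, Matrix.trace_one]
      simp [Fintype.card_fin]
      ring
    have hdt : ∀ j : Fin l, (j : ℕ) < k → φ (α j) 1 = lam j * lam j := by
      intro j hj
      rw [hφ1 j, hscal j hj, Matrix.det_smul, Matrix.det_one]
      simp [Fintype.card_fin]
      ring
    -- the function F = s²/4 - p and the finite set S of scalar nodes
    have hFdiff : DifferentiableOn ℂ (fun z => φ z 0 * φ z 0 / 4 - φ z 1) unitDisc :=
      ((hs.mul hs).div_const 4).sub hp
    set S : Finset ℂ := (Finset.univ.filter (fun j : Fin l => (j : ℕ) < k)).image α with hSdef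
    have hmemS : ∀ a, a ∈ S ↔ ∃ j : Fin l, (j : ℕ) < k ∧ α j = a := by
      intro a
      simp [hSdef]
    have hSsub : ∀ a ∈ S, a ∈ unitDisc := by
      intro a ha
      obtain ⟨j, _, hja⟩ := (hmemS a).1 ha
      exact hja ▸ hαD j
    have hF0 : ∀ a ∈ S, φ a 0 * φ a 0 / 4 - φ a 1 = 0 := by
      intro a ha
      obtain ⟨j, hj, hja⟩ := (hmemS a).1 ha
      rw [← hja, htr j hj, hdt j hj]
      ring
    have hF1 : ∀ a ∈ S, deriv (fun z => φ z 0 * φ z 0 / 4 - φ z 1) a = 0 := by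
      intro a ha
      obtain ⟨j, hj, hja⟩ := (hmemS a).1 ha
      subst hja
      have hnb : unitDisc ∈ 𝓝 (α j) := isOpen_ball.mem_nhds (hαD j)
      have hsa : DifferentiableAt ℂ (fun z => φ z 0) (α j) := hs.differentiableAt hnb
      have hpa : DifferentiableAt ℂ (fun z => φ z 1) (α j) := hp.differentiableAt hnb
      rw [deriv_fun_sub ((hsa.fun_mul hsa).div_const 4) hpa, deriv_div_const,
        deriv_fun_mul hsa hsa, htr j hj, hder j hj]
      ring
    obtain ⟨u, hu, huprod, huzero⟩ :=
      aux_div_lemma S hSsub (fun z => φ z 0 * φ z 0 / 4 - φ z 1) hFdiff hF0 hF1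
    -- the basic lift ψ0
    set ψ0 : ℂ → Matrix (Fin 2) (Fin 2) ℂ :=
      fun z => !![φ z 0 / 2, u z; ∏ a ∈ S, (z - a), φ z 0 / 2] with hψ0def
    have hψ0tr : ∀ z, (ψ0 z).trace = φ z 0 := by
      intro z
      rw [hψ0def]
      simp [Matrix.trace_fin_two]
    have hψ0det : ∀ z, (ψ0 z).det = φ z 1 := by
      intro z
      rw [hψ0def]
      simp only [Matrix.det_fin_two_of]
      linear_combination - huprod z
    have hψ0holo : MatHolo ψ0 :=
      aux_matHolo_of _ _ _ _ (hs.div_const 2) hu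
        (fun z _ => (DifferentiableAt.fun_finsetProd
          fun i _ => differentiableAt_id.sub_const _).differentiableWithinAt)
        (hs.div_const 2)
    -- at scalar nodes ψ0 is the correct scalar matrix
    have hψ0scal : ∀ j : Fin l, (j : ℕ) < k →
        ψ0 (α j) = lam j • (1 : Matrix (Fin 2) (Fin 2) ℂ) := by
      intro j hj
      have hmem : α j ∈ S := (hmemS _).2 ⟨j, hj, rfl⟩
      have hv0 : (∏ a ∈ S, (α j - a)) = 0 := Finset.prod_eq_zero hmem (sub_self _)
      rw [hψ0def]
      ext i i'
      fin_cases i <;> fin_cases i' <;>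
        simp [htr j hj, huzero (α j) hmem, hv0, Matrix.smul_apply, Matrix.one_apply] <;>
        ring
    -- at non-scalar nodes, ψ0 (α j) is similar to A j
    have hGex : ∀ j : Fin l, k ≤ (j : ℕ) →
        ∃ G : Matrix (Fin 2) (Fin 2) ℂ, IsUnit G.det ∧ A j * G = G * ψ0 (α j) := by
      intro j hjk
      have hvne : (∏ a ∈ S, (α j - a)) ≠ 0 := by
        rw [Finset.prod_ne_zero_iff]
        intro a ha
        obtain ⟨i, hik, hia⟩ := (hmemS a).1 ha
        refine sub_ne_zero.2 fun he => ?_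
        have hji : j = i := hαinj (he.trans hia.symm)
        subst hji
        omega
      have hns : ¬ IsScalarMatrix (ψ0 (α j)) := by
        rintro ⟨c, hc⟩
        apply hvne
        have h10 : ψ0 (α j) 1 0 = 0 := by
          rw [hc]
          simp [Matrix.smul_apply, Matrix.one_apply]
        rw [hψ0def] at h10
        simpa using h10
      exact aux_similar (A j) (ψ0 (α j)) (hnonscal j hjk) hns
        (((hψ0tr (α j)).trans (hφ0 j)).symm) (((hψ0det (α j)).trans (hφ1 j)).symm)
    -- decompose the conjugating matrices
    have hdata : ∀ j : Fin l, ∃ a b c d e : ℂ, d ≠ 0 ∧ e ≠ 0 ∧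
        (k ≤ (j : ℕ) →
          A j * (!![1, a; 0, 1] * !![1, 0; b, 1] * !![1, c; 0, 1] * !![d, 0; 0, e]) =
          (!![1, a; 0, 1] * !![1, 0; b, 1] * !![1, c; 0, 1] * !![d, 0; 0, e]) * ψ0 (α j)) := by
      intro j
      by_cases hjk : k ≤ (j : ℕ)
      · obtain ⟨G, hG, hGc⟩ := hGex j hjk
        obtain ⟨a, b, c, d, e, hd, he, hGe⟩ := aux_ULUD G hG
        exact ⟨a, b, c, d, e, hd, he, fun _ => by rw [← hGe]; exact hGc⟩
      · exact ⟨0, 0, 0, 1, 1, one_ne_zero, one_ne_zero, fun h => absurd h hjk⟩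
    choose av bv cv dv ev hdv hev hcomm using hdata
    -- holomorphic interpolation of the decomposition data
    obtain ⟨fa, hfa, hfav⟩ : ∃ f : ℂ → ℂ, Differentiable ℂ f ∧ ∀ j, f (α j) = av j :=
      ⟨fun z => (Lagrange.interpolate Finset.univ α av).eval z,
        (Lagrange.interpolate Finset.univ α av).differentiable,
        fun j => Lagrange.eval_interpolate_at_node av hαinj.injOn (Finset.mem_univ j)⟩
    obtain ⟨fb, hfb, hfbv⟩ : ∃ f : ℂ → ℂ, Differentiable ℂ f ∧ ∀ j, f (α j) = bv j :=
      ⟨fun z => (Lagrange.interpolate Finset.univ α bv).eval z,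
        (Lagrange.interpolate Finset.univ α bv).differentiable,
        fun j => Lagrange.eval_interpolate_at_node bv hαinj.injOn (Finset.mem_univ j)⟩
    obtain ⟨fc, hfc, hfcv⟩ : ∃ f : ℂ → ℂ, Differentiable ℂ f ∧ ∀ j, f (α j) = cv j :=
      ⟨fun z => (Lagrange.interpolate Finset.univ α cv).eval z,
        (Lagrange.interpolate Finset.univ α cv).differentiable,
        fun j => Lagrange.eval_interpolate_at_node cv hαinj.injOn (Finset.mem_univ j)⟩
    obtain ⟨fd, hfd, hfdne, hfdv⟩ :
        ∃ f : ℂ → ℂ, Differentiable ℂ f ∧ (∀ z, f z ≠ 0) ∧ ∀ j, f (α j) = dv j :=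
      ⟨fun z => Complex.exp
          ((Lagrange.interpolate Finset.univ α (fun j => Complex.log (dv j))).eval z),
        (Lagrange.interpolate Finset.univ α (fun j => Complex.log (dv j))).differentiable.cexp,
        fun z => Complex.exp_ne_zero _,
        fun j => by
          beta_reduce
          rw [Lagrange.eval_interpolate_at_node _ hαinj.injOn (Finset.mem_univ j)]
          exact Complex.exp_log (hdv j)⟩
    obtain ⟨fe, hfe, hfene, hfev⟩ :
        ∃ f : ℂ → ℂ, Differentiable ℂ f ∧ (∀ z, f z ≠ 0) ∧ ∀ j, f (α j) = ev j :=
      ⟨fun z => Complex.exp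
          ((Lagrange.interpolate Finset.univ α (fun j => Complex.log (ev j))).eval z),
        (Lagrange.interpolate Finset.univ α (fun j => Complex.log (ev j))).differentiable.cexp,
        fun z => Complex.exp_ne_zero _,
        fun j => by
          beta_reduce
          rw [Lagrange.eval_interpolate_at_node _ hαinj.injOn (Finset.mem_univ j)]
          exact Complex.exp_log (hev j)⟩
    -- the conjugating map Q and its pointwise inverse Qi
    set Q : ℂ → Matrix (Fin 2) (Fin 2) ℂ := fun z =>
      !![1, fa z; 0, 1] * !![1, 0; fb z, 1] * !![1, fc z; 0, 1] * !![fd z, 0; 0, fe z]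
      with hQdef
    set Qi : ℂ → Matrix (Fin 2) (Fin 2) ℂ := fun z =>
      !![(fd z)⁻¹, 0; 0, (fe z)⁻¹] * !![1, -fc z; 0, 1] * !![1, 0; -fb z, 1] * !![1, -fa z; 0, 1]
      with hQidef
    have hQQi : ∀ z, Q z * Qi z = 1 := by
      intro z
      have hd := hfdne z
      have he := hfene z
      rw [hQdef, hQidef]
      simp only [Matrix.mul_fin_two]
      ext i i'
      fin_cases i <;> fin_cases i' <;>
        ( simp [Matrix.one_apply]
          field_simp
          ring )
    have hQiQ : ∀ z, Qi z * Q z = 1 := by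
      intro z
      have hd := hfdne z
      have he := hfene z
      rw [hQdef, hQidef]
      simp only [Matrix.mul_fin_two]
      ext i i'
      fin_cases i <;> fin_cases i' <;>
        ( simp [Matrix.one_apply]
          field_simp
          ring )
    have hQholo : MatHolo Q := by
      apply aux_matHolo_mul
      apply aux_matHolo_mul
      apply aux_matHolo_mul
      · exact aux_matHolo_of _ _ _ _ (differentiableOn_const 1) hfa.differentiableOn
          (differentiableOn_const 0) (differentiableOn_const 1)
      · exact aux_matHolo_of _ _ _ _ (differentiableOn_const 1) (differentiableOn_const 0)
          hfb.differentiableOn (differentiableOn_const 1)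
      · exact aux_matHolo_of _ _ _ _ (differentiableOn_const 1) hfc.differentiableOn
          (differentiableOn_const 0) (differentiableOn_const 1)
      · exact aux_matHolo_of _ _ _ _ hfd.differentiableOn (differentiableOn_const 0)
          (differentiableOn_const 0) hfe.differentiableOn
    have hQiholo : MatHolo Qi := by
      apply aux_matHolo_mul
      apply aux_matHolo_mul
      apply aux_matHolo_mul
      · exact aux_matHolo_of _ _ _ _ ((hfd.inv hfdne).differentiableOn)
          (differentiableOn_const 0) (differentiableOn_const 0)
          ((hfe.inv hfene).differentiableOn)
      · exact aux_matHolo_of _ _ _ _ (differentiableOn_const 1) hfc.neg.differentiableOn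
          (differentiableOn_const 0) (differentiableOn_const 1)
      · exact aux_matHolo_of _ _ _ _ (differentiableOn_const 1) (differentiableOn_const 0)
          hfb.neg.differentiableOn (differentiableOn_const 1)
      · exact aux_matHolo_of _ _ _ _ (differentiableOn_const 1) hfa.neg.differentiableOn
          (differentiableOn_const 0) (differentiableOn_const 1)
    -- the final lift
    refine ⟨fun z => Q z * ψ0 z * Qi z, ?_, ?_, ?_, ?_⟩
    · exact aux_matHolo_mul (aux_matHolo_mul hQholo hψ0holo) hQiholo
    · -- maps to the spectral ball
      intro z hz
      show Q z * ψ0 z * Qi z ∈ SpectralBall 2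
      obtain ⟨B, hB, hσB⟩ := hφmaps hz
      have hBtr : B.trace = φ z 0 := by
        have h6 := congrFun hσB 0
        rw [aux_sigmaCoeff_two] at h6
        simpa using h6
      have hBdt : B.det = φ z 1 := by
        have h6 := congrFun hσB 1
        rw [aux_sigmaCoeff_two] at h6
        simpa using h6
      have htrΨ : (Q z * ψ0 z * Qi z).trace = φ z 0 :=
        (aux_conj_trace (Q z) (ψ0 z) (Qi z) (hQiQ z)).trans (hψ0tr z)
      have hdetΨ : (Q z * ψ0 z * Qi z).det = φ z 1 :=
        (aux_conj_det (Q z) (ψ0 z) (Qi z) (hQQi z)).trans (hψ0det z)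
      intro w hw
      rw [aux_mem_spectrum, aux_charpoly_fin_two, htrΨ, hdetΨ] at hw
      apply hB w
      rw [aux_mem_spectrum, aux_charpoly_fin_two, hBtr, hBdt]
      exact hw
    · -- σ ∘ ψ = φ
      intro z hz
      show sigmaCoeff 2 (Q z * ψ0 z * Qi z) = φ z
      have htrΨ : (Q z * ψ0 z * Qi z).trace = φ z 0 :=
        (aux_conj_trace (Q z) (ψ0 z) (Qi z) (hQiQ z)).trans (hψ0tr z)
      have hdetΨ : (Q z * ψ0 z * Qi z).det = φ z 1 :=
        (aux_conj_det (Q z) (ψ0 z) (Qi z) (hQQi z)).trans (hψ0det z)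
      rw [aux_sigmaCoeff_two, htrΨ, hdetΨ]
      funext i
      fin_cases i <;> simp
    · -- interpolation at the nodes
      intro j
      show Q (α j) * ψ0 (α j) * Qi (α j) = A j
      by_cases hjk : k ≤ (j : ℕ)
      · have hQval : Q (α j) =
            !![1, av j; 0, 1] * !![1, 0; bv j, 1] * !![1, cv j; 0, 1] *
              !![dv j, 0; 0, ev j] := by
          rw [hQdef]
          beta_reduce
          rw [hfav j, hfbv j, hfcv j, hfdv j, hfev j]
        have hc := hcomm j hjk
        rw [← hQval] at hc
        calc Q (α j) * ψ0 (α j) * Qi (α j) = A j * Q (α j) * Qi (α j) := by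
              rw [← hc]
          _ = A j := by rw [Matrix.mul_assoc, hQQi, Matrix.mul_one]
      · push_neg at hjk
        rw [hψ0scal j hjk, hscal j hjk]
        rw [mul_smul_comm, Matrix.mul_one, smul_mul_assoc, hQQi]
end
end

section
/- Let α_1,…,α_l be pairwise distinct points of the open unit disc 𝔻, let A_1 = λ_1 I, …, A_k = λ_k I ∈ Ω_2 be scalar matrices and A_{k+1},…,A_l ∈ Ω_2 be non-scalar matrices. Then there exists a holomorphic map ψ : 𝔻 → Ω_2 with ψ(α_j) = A_j for j = 1,…,l if and only if there exists a holomorphic map φ = (φ_1,φ_2) : 𝔻 → 𝔾_2 with φ(α_j) = σ(A_j) for j = 1,…,l and φ_2′(α_j) = λ_j φ_1′(α_j) for j = 1,…,k. -/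
open Metric Matrix Polynomial Set Filter

noncomputable section

/-! ### Auxiliary lemmas -/

lemma isOpen_unitDisc : IsOpen unitDisc := isOpen_ball

lemma diffAt_of_diffOn {f : ℂ → ℂ} {w : ℂ} (hf : DifferentiableOn ℂ f unitDisc)
    (hw : w ∈ unitDisc) : DifferentiableAt ℂ f w :=
  hf.differentiableAt (isOpen_unitDisc.mem_nhds hw)

lemma sigmaCoeff_two (A : Matrix (Fin 2) (Fin 2) ℂ) :
    sigmaCoeff 2 A = ![A.trace, A.det] := by
  funext i
  fin_cases i
  · have := Matrix.trace_eq_neg_charpoly_coeff A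
    simp [sigmaCoeff, this]
  · have := Matrix.det_eq_sign_charpoly_coeff A
    simp [sigmaCoeff, this]

lemma mem_spectrum_two_iff (A : Matrix (Fin 2) (Fin 2) ℂ) (z : ℂ) :
    z ∈ spectrum ℂ A ↔ (z * z - A.trace * z + A.det = 0) := by
  rw [spectrum.mem_iff, Matrix.isUnit_iff_isUnit_det, isUnit_iff_ne_zero, not_not,
    Algebra.algebraMap_eq_smul_one]
  constructor
  · intro h
    rw [Matrix.det_fin_two] at h
    simp [Matrix.trace_fin_two, Matrix.det_fin_two, Matrix.one_apply] at h ⊢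
    ring_nf; ring_nf at h
    linear_combination h
  · intro h
    rw [Matrix.det_fin_two]
    simp [Matrix.trace_fin_two, Matrix.det_fin_two, Matrix.one_apply] at h ⊢
    ring_nf; ring_nf at h
    linear_combination h

lemma spectrum_congr_two {A B : Matrix (Fin 2) (Fin 2) ℂ} (h1 : A.trace = B.trace)
    (h2 : A.det = B.det) : spectrum ℂ A = spectrum ℂ B := by
  ext z
  rw [mem_spectrum_two_iff, mem_spectrum_two_iff, h1, h2]

lemma mem_spectralBall_congr {A B : Matrix (Fin 2) (Fin 2) ℂ} (h1 : A.trace = B.trace)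
    (h2 : A.det = B.det) (hA : A ∈ SpectralBall 2) : B ∈ SpectralBall 2 := by
  intro z hz
  exact hA z (by rwa [spectrum_congr_two h1 h2])

lemma exists_interp {l : ℕ} (α : Fin l → ℂ) (hα : Function.Injective α) (r : Fin l → ℂ) :
    ∃ f : ℂ → ℂ, Differentiable ℂ f ∧ ∀ j, f (α j) = r j := by
  refine ⟨fun z => (Lagrange.interpolate Finset.univ α r).eval z,
    (Lagrange.interpolate Finset.univ α r).differentiable, fun j => ?_⟩
  exact Lagrange.eval_interpolate_at_node r (hα.injOn) (Finset.mem_univ j)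

lemma exists_interp_ne {l : ℕ} (α : Fin l → ℂ) (hα : Function.Injective α) (r : Fin l → ℂ)
    (hr : ∀ j, r j ≠ 0) :
    ∃ f : ℂ → ℂ, Differentiable ℂ f ∧ (∀ j, f (α j) = r j) ∧ ∀ z, f z ≠ 0 := by
  obtain ⟨g, hg, hgval⟩ := exists_interp α hα (fun j => Complex.log (r j))
  refine ⟨fun z => Complex.exp (g z), Complex.differentiable_exp.comp hg,
    fun j => ?_, fun z => Complex.exp_ne_zero _⟩
  show Complex.exp (g (α j)) = r j
  rw [hgval j, Complex.exp_log (hr j)]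

lemma sl2_decomp (P : Matrix (Fin 2) (Fin 2) ℂ) (hP : P.det ≠ 0) :
    ∃ x y β t d : ℂ, β ≠ 0 ∧ d ≠ 0 ∧
      P = !![1, x; 0, 1] * !![1, 0; β, 1] * !![1, y; 0, 1] * !![1, 0; -t, 1] *
        !![d, 0; 0, 1] := by
  set d := P.det with hd
  set N : Matrix (Fin 2) (Fin 2) ℂ := P * !![d⁻¹, 0; 0, 1] with hN
  have hdetN : N.det = 1 := by
    rw [hN, Matrix.det_mul]
    simp only [Matrix.det_fin_two_of, mul_one, mul_zero, zero_mul, sub_zero, ← hd]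
    rw [mul_inv_cancel₀ hP]
  set t : ℂ := if N 1 1 = 0 then 0 else (1 - N 1 0) / N 1 1 with ht
  set K : Matrix (Fin 2) (Fin 2) ℂ := N * !![1, 0; t, 1] with hK
  have hdetK : K.det = 1 := by
    rw [hK, Matrix.det_mul, hdetN]; simp [Matrix.det_fin_two_of]
  set β := K 1 0 with hβ
  have hβK : β = N 1 0 + N 1 1 * t := by
    rw [hβ, hK]; simp [Matrix.mul_apply, Fin.sum_univ_two]
  have hβ0 : β ≠ 0 := by
    rw [hβK, ht]
    by_cases h11 : N 1 1 = 0
    · simp only [h11, if_pos, zero_mul, add_zero]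
      intro h10
      rw [Matrix.det_fin_two, h11, h10] at hdetN; simp at hdetN
    · rw [if_neg h11, mul_div_assoc']
      field_simp
      simp
  have hdet2 : K 0 0 * K 1 1 - K 0 1 * K 1 0 = 1 := by
    rw [← Matrix.det_fin_two]; exact hdetK
  refine ⟨(K 0 0 - 1)/β, (K 1 1 - 1)/β, β, t, d, hβ0, hP, ?_⟩
  have hEK : !![1, (K 0 0 - 1)/β; 0, 1] * !![1, 0; β, 1] * !![1, (K 1 1 - 1)/β; 0, 1] = K := by
    ext i j
    fin_cases i <;> fin_cases j
    · simp [Matrix.mul_apply, Fin.sum_univ_two]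
      field_simp
      ring
    · simp [Matrix.mul_apply, Fin.sum_univ_two]
      field_simp
      linear_combination hdet2
    · simp [Matrix.mul_apply, Fin.sum_univ_two, hβ]
    · simp [Matrix.mul_apply, Fin.sum_univ_two]
      field_simp
      ring
  rw [hEK, hK]
  have h1 : !![(1:ℂ), 0; t, 1] * !![1, 0; -t, 1] = 1 := by
    ext i j; fin_cases i <;> fin_cases j <;>
      simp [Matrix.mul_apply, Fin.sum_univ_two, Matrix.one_apply]
  have h2 : !![d⁻¹, (0:ℂ); 0, 1] * !![d, 0; 0, 1] = 1 := by
    ext i j; fin_cases i <;> fin_cases j <;>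
      simp [Matrix.mul_apply, Fin.sum_univ_two, Matrix.one_apply, inv_mul_cancel₀ hP]
  have hPN : P = N * !![d, 0; 0, 1] := by rw [hN, mul_assoc, h2, mul_one]
  have hNK : N = K * !![1, 0; -t, 1] := by rw [hK, mul_assoc, h1, mul_one]
  have h1' : !![(1:ℂ), 0; -t, 1] * !![1, 0; t, 1] = 1 := by
    ext i j; fin_cases i <;> fin_cases j <;>
      simp [Matrix.mul_apply, Fin.sum_univ_two, Matrix.one_apply]
  rw [hPN, hNK, ← hEK, mul_assoc _ (!![(1:ℂ), 0; -t, 1]) (!![(1:ℂ), 0; t, 1]), h1', mul_one]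

def DiffEnt (F : ℂ → Matrix (Fin 2) (Fin 2) ℂ) : Prop :=
  ∀ i j : Fin 2, Differentiable ℂ (fun z => F z i j)

lemma diffEnt_of {p q r s : ℂ → ℂ} (hp : Differentiable ℂ p) (hq : Differentiable ℂ q)
    (hr : Differentiable ℂ r) (hs : Differentiable ℂ s) :
    DiffEnt (fun z => !![p z, q z; r z, s z]) := by
  intro i j
  fin_cases i <;> fin_cases j <;> simpa

lemma diffEnt_mul {F G : ℂ → Matrix (Fin 2) (Fin 2) ℂ} (hF : DiffEnt F) (hG : DiffEnt G) :
    DiffEnt (fun z => F z * G z) := by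
  intro i j
  have : (fun z => (F z * G z) i j)
      = fun z => F z i 0 * G z 0 j + F z i 1 * G z 1 j := by
    funext z; rw [Matrix.mul_apply, Fin.sum_univ_two]
  rw [this]
  exact ((hF i 0).mul (hG 0 j)).add ((hF i 1).mul (hG 1 j))

lemma mul_mul_eq_one {A B A' B' : Matrix (Fin 2) (Fin 2) ℂ} (hA : A * A' = 1)
    (hB : B * B' = 1) : (A * B) * (B' * A') = 1 := by
  rw [mul_assoc, ← mul_assoc B, hB, one_mul, hA]

lemma exists_entire_conj {l : ℕ} (α : Fin l → ℂ) (hα : Function.Injective α)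
    (P : Fin l → Matrix (Fin 2) (Fin 2) ℂ) (hP : ∀ j, (P j).det ≠ 0) :
    ∃ M Mi : ℂ → Matrix (Fin 2) (Fin 2) ℂ, DiffEnt M ∧ DiffEnt Mi ∧
      (∀ z, M z * Mi z = 1) ∧ (∀ z, Mi z * M z = 1) ∧ (∀ j, M (α j) = P j) := by
  have hdec := fun j => sl2_decomp (P j) (hP j)
  choose xj yj βj tj dj hβj hdj hPeq using hdec
  obtain ⟨x, hxd, hx⟩ := exists_interp α hα xj
  obtain ⟨y, hyd, hy⟩ := exists_interp α hα yj
  obtain ⟨t, htd, ht⟩ := exists_interp α hα tj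
  obtain ⟨b, hbd, hb, hb0⟩ := exists_interp_ne α hα βj hβj
  obtain ⟨e, hed, he, he0⟩ := exists_interp_ne α hα dj hdj
  set E1 : ℂ → Matrix (Fin 2) (Fin 2) ℂ := fun z => !![1, x z; 0, 1] with hE1
  set E2 : ℂ → Matrix (Fin 2) (Fin 2) ℂ := fun z => !![1, 0; b z, 1] with hE2
  set E3 : ℂ → Matrix (Fin 2) (Fin 2) ℂ := fun z => !![1, y z; 0, 1] with hE3
  set E4 : ℂ → Matrix (Fin 2) (Fin 2) ℂ := fun z => !![1, 0; -(t z), 1] with hE4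
  set E5 : ℂ → Matrix (Fin 2) (Fin 2) ℂ := fun z => !![e z, 0; 0, 1] with hE5
  set F1 : ℂ → Matrix (Fin 2) (Fin 2) ℂ := fun z => !![1, -(x z); 0, 1] with hF1
  set F2 : ℂ → Matrix (Fin 2) (Fin 2) ℂ := fun z => !![1, 0; -(b z), 1] with hF2
  set F3 : ℂ → Matrix (Fin 2) (Fin 2) ℂ := fun z => !![1, -(y z); 0, 1] with hF3
  set F4 : ℂ → Matrix (Fin 2) (Fin 2) ℂ := fun z => !![1, 0; t z, 1] with hF4
  set F5 : ℂ → Matrix (Fin 2) (Fin 2) ℂ := fun z => !![(e z)⁻¹, 0; 0, 1] with hF5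
  have c1 : ∀ z, E1 z * F1 z = 1 := by
    intro z; ext i j; fin_cases i <;> fin_cases j <;>
      simp [hE1, hF1, Matrix.mul_apply, Fin.sum_univ_two, Matrix.one_apply]
  have c1' : ∀ z, F1 z * E1 z = 1 := by
    intro z; ext i j; fin_cases i <;> fin_cases j <;>
      simp [hE1, hF1, Matrix.mul_apply, Fin.sum_univ_two, Matrix.one_apply]
  have c2 : ∀ z, E2 z * F2 z = 1 := by
    intro z; ext i j; fin_cases i <;> fin_cases j <;>
      simp [hE2, hF2, Matrix.mul_apply, Fin.sum_univ_two, Matrix.one_apply]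
  have c2' : ∀ z, F2 z * E2 z = 1 := by
    intro z; ext i j; fin_cases i <;> fin_cases j <;>
      simp [hE2, hF2, Matrix.mul_apply, Fin.sum_univ_two, Matrix.one_apply]
  have c3 : ∀ z, E3 z * F3 z = 1 := by
    intro z; ext i j; fin_cases i <;> fin_cases j <;>
      simp [hE3, hF3, Matrix.mul_apply, Fin.sum_univ_two, Matrix.one_apply]
  have c3' : ∀ z, F3 z * E3 z = 1 := by
    intro z; ext i j; fin_cases i <;> fin_cases j <;>
      simp [hE3, hF3, Matrix.mul_apply, Fin.sum_univ_two, Matrix.one_apply]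
  have c4 : ∀ z, E4 z * F4 z = 1 := by
    intro z; ext i j; fin_cases i <;> fin_cases j <;>
      simp [hE4, hF4, Matrix.mul_apply, Fin.sum_univ_two, Matrix.one_apply]
  have c4' : ∀ z, F4 z * E4 z = 1 := by
    intro z; ext i j; fin_cases i <;> fin_cases j <;>
      simp [hE4, hF4, Matrix.mul_apply, Fin.sum_univ_two, Matrix.one_apply]
  have c5 : ∀ z, E5 z * F5 z = 1 := by
    intro z; ext i j; fin_cases i <;> fin_cases j <;>
      simp [hE5, hF5, Matrix.mul_apply, Fin.sum_univ_two, Matrix.one_apply,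
        mul_inv_cancel₀ (he0 z)]
  have c5' : ∀ z, F5 z * E5 z = 1 := by
    intro z; ext i j; fin_cases i <;> fin_cases j <;>
      simp [hE5, hF5, Matrix.mul_apply, Fin.sum_univ_two, Matrix.one_apply,
        inv_mul_cancel₀ (he0 z)]
  refine ⟨fun z => E1 z * E2 z * E3 z * E4 z * E5 z,
    fun z => F5 z * (F4 z * (F3 z * (F2 z * F1 z))), ?_, ?_, ?_, ?_, ?_⟩
  · exact diffEnt_mul (diffEnt_mul (diffEnt_mul (diffEnt_mul
      (diffEnt_of (differentiable_const 1) hxd (differentiable_const 0) (differentiable_const 1))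
      (diffEnt_of (differentiable_const 1) (differentiable_const 0) hbd (differentiable_const 1)))
      (diffEnt_of (differentiable_const 1) hyd (differentiable_const 0) (differentiable_const 1)))
      (diffEnt_of (differentiable_const 1) (differentiable_const 0) htd.neg (differentiable_const 1)))
      (diffEnt_of hed (differentiable_const 0) (differentiable_const 0) (differentiable_const 1))
  · exact diffEnt_mul
      (diffEnt_of (hed.inv he0) (differentiable_const 0) (differentiable_const 0) (differentiable_const 1))
      (diffEnt_mul (diffEnt_of (differentiable_const 1) (differentiable_const 0) htd (differentiable_const 1))
      (diffEnt_mul (diffEnt_of (differentiable_const 1) hyd.neg (differentiable_const 0) (differentiable_const 1))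
      (diffEnt_mul (diffEnt_of (differentiable_const 1) (differentiable_const 0) hbd.neg (differentiable_const 1))
      (diffEnt_of (differentiable_const 1) hxd.neg (differentiable_const 0) (differentiable_const 1)))))
  · intro z
    exact mul_mul_eq_one (mul_mul_eq_one (mul_mul_eq_one (mul_mul_eq_one (c1 z) (c2 z)) (c3 z)) (c4 z)) (c5 z)
  · intro z
    have : ∀ {A B A' B' : Matrix (Fin 2) (Fin 2) ℂ}, A' * A = 1 → B' * B = 1 →
        (B' * A') * (A * B) = 1 := fun hA hB => mul_mul_eq_one hB hA
    exact this (this (this (this (c1' z) (c2' z)) (c3' z)) (c4' z)) (c5' z)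
  · intro j
    show E1 (α j) * E2 (α j) * E3 (α j) * E4 (α j) * E5 (α j) = P j
    rw [hE1, hE2, hE3, hE4, hE5]
    simp only [hx j, hy j, ht j, hb j, he j]
    exact (hPeq j).symm

lemma exists_conjugator (A : Matrix (Fin 2) (Fin 2) ℂ) (h : ¬ IsScalarMatrix A) :
    ∃ P : Matrix (Fin 2) (Fin 2) ℂ, P.det ≠ 0 ∧
      A * P = P * !![0, -A.det; 1, A.trace] := by
  by_cases hc : A 1 0 ≠ 0
  · refine ⟨!![1, A 0 0; 0, A 1 0], by simp [Matrix.det_fin_two, hc], ?_⟩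
    ext i j
    fin_cases i <;> fin_cases j <;>
      simp [Matrix.mul_apply, Fin.sum_univ_two, Matrix.det_fin_two, Matrix.trace_fin_two] <;> ring
  push_neg at hc
  by_cases hb : A 0 1 ≠ 0
  · refine ⟨!![0, A 0 1; 1, A 1 1], by simp [Matrix.det_fin_two, hb], ?_⟩
    ext i j
    fin_cases i <;> fin_cases j <;>
      simp [Matrix.mul_apply, Fin.sum_univ_two, Matrix.det_fin_two, Matrix.trace_fin_two, hc] <;> ring
  push_neg at hb
  have had : A 0 0 ≠ A 1 1 := by
    intro he
    exact h ⟨A 1 1, by ext i j; fin_cases i <;> fin_cases j <;>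
      simp [Matrix.one_apply, hb, hc, he]⟩
  refine ⟨!![1, A 0 0; 1, A 1 1], by simp [Matrix.det_fin_two, sub_ne_zero]; exact fun hh => had hh.symm, ?_⟩
  ext i j
  fin_cases i <;> fin_cases j <;>
    simp [Matrix.mul_apply, Fin.sum_univ_two, Matrix.det_fin_two, Matrix.trace_fin_two, hb, hc] <;> ring

lemma matHolo_of {p q r s : ℂ → ℂ} (hp : DifferentiableOn ℂ p unitDisc)
    (hq : DifferentiableOn ℂ q unitDisc) (hr : DifferentiableOn ℂ r unitDisc)
    (hs : DifferentiableOn ℂ s unitDisc) :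
    MatHolo (fun z => !![p z, q z; r z, s z]) := by
  intro i j
  fin_cases i <;> fin_cases j <;> simpa

lemma matHolo_mul {F G : ℂ → Matrix (Fin 2) (Fin 2) ℂ} (hF : MatHolo F) (hG : MatHolo G) :
    MatHolo (fun z => F z * G z) := by
  intro i j
  have : (fun z => (F z * G z) i j)
      = fun z => F z i 0 * G z 0 j + F z i 1 * G z 1 j := by
    funext z; rw [Matrix.mul_apply, Fin.sum_univ_two]
  rw [this]
  exact ((hF i 0).mul (hG 0 j)).add ((hF i 1).mul (hG 1 j))

lemma forward_dir (k l : ℕ)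
    (α : Fin l → ℂ) (hαD : ∀ j, α j ∈ unitDisc)
    (A : Fin l → Matrix (Fin 2) (Fin 2) ℂ) (lam : Fin l → ℂ)
    (hscal : ∀ j : Fin l, (j : ℕ) < k → A j = lam j • (1 : Matrix (Fin 2) (Fin 2) ℂ))
    (ψ : ℂ → Matrix (Fin 2) (Fin 2) ℂ) (hholo : MatHolo ψ)
    (hmaps : Set.MapsTo ψ unitDisc (SpectralBall 2)) (hval : ∀ j, ψ (α j) = A j) :
    (∃ φ : ℂ → Fin 2 → ℂ, DifferentiableOn ℂ φ unitDisc ∧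
        Set.MapsTo φ unitDisc (SymPolydisc 2) ∧
        (∀ j, φ (α j) = sigmaCoeff 2 (A j)) ∧
        (∀ j : Fin l, (j : ℕ) < k →
          deriv (fun z => φ z 1) (α j) = lam j * deriv (fun z => φ z 0) (α j))) := by
  refine ⟨fun z => sigmaCoeff 2 (ψ z), ?_, ?_, fun j => ?_, ?_⟩
  case refine_3 =>
    show sigmaCoeff 2 (ψ (α j)) = sigmaCoeff 2 (A j)
    rw [hval j]
  · rw [differentiableOn_pi]
    intro i
    fin_cases i
    · exact ((hholo 0 0).add (hholo 1 1)).congr fun z _ => by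
        rw [sigmaCoeff_two]; simp [Matrix.trace_fin_two]
    · exact (((hholo 0 0).mul (hholo 1 1)).sub ((hholo 0 1).mul (hholo 1 0))).congr fun z _ => by
        rw [sigmaCoeff_two]; simp [Matrix.det_fin_two]
  · intro z hz
    exact ⟨ψ z, hmaps hz, rfl⟩
  · intro j hj
    have hdA : ∀ i i' : Fin 2, DifferentiableAt ℂ (fun z => ψ z i i') (α j) :=
      fun i i' => diffAt_of_diffOn (hholo i i') (hαD j)
    have h00 := (hdA 0 0).hasDerivAt
    have h11 := (hdA 1 1).hasDerivAt
    have h01 := (hdA 0 1).hasDerivAt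
    have h10 := (hdA 1 0).hasDerivAt
    have hv : ∀ i i' : Fin 2, ψ (α j) i i' = if i = i' then lam j else 0 := by
      intro i i'
      rw [hval j, hscal j hj]
      simp [Matrix.one_apply]
    have e1 : (fun z => sigmaCoeff 2 (ψ z) 1)
        = fun z => ψ z 0 0 * ψ z 1 1 - ψ z 0 1 * ψ z 1 0 := by
      funext z; rw [sigmaCoeff_two]; simp [Matrix.det_fin_two]
    have e0 : (fun z => sigmaCoeff 2 (ψ z) 0) = fun z => ψ z 0 0 + ψ z 1 1 := by
      funext z; rw [sigmaCoeff_two]; simp [Matrix.trace_fin_two]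
    show deriv (fun z => sigmaCoeff 2 (ψ z) 1) (α j)
      = lam j * deriv (fun z => sigmaCoeff 2 (ψ z) 0) (α j)
    rw [e0, e1]
    have hd1 : HasDerivAt (fun z => ψ z 0 0 * ψ z 1 1 - ψ z 0 1 * ψ z 1 0)
        ((deriv (fun z => ψ z 0 0) (α j) * ψ (α j) 1 1
          + ψ (α j) 0 0 * deriv (fun z => ψ z 1 1) (α j))
        - (deriv (fun z => ψ z 0 1) (α j) * ψ (α j) 1 0
          + ψ (α j) 0 1 * deriv (fun z => ψ z 1 0) (α j))) (α j) :=
      (h00.mul h11).sub (h01.mul h10)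
    have hd0 : HasDerivAt (fun z => ψ z 0 0 + ψ z 1 1)
        (deriv (fun z => ψ z 0 0) (α j) + deriv (fun z => ψ z 1 1) (α j)) (α j) :=
      h00.add h11
    rw [hd1.deriv, hd0.deriv, hv 0 0, hv 1 1, hv 0 1, hv 1 0]
    simp
    ring

lemma backward_dir (k l : ℕ)
    (α : Fin l → ℂ) (hαinj : Function.Injective α) (hαD : ∀ j, α j ∈ unitDisc)
    (A : Fin l → Matrix (Fin 2) (Fin 2) ℂ) (lam : Fin l → ℂ)
    (hA : ∀ j, A j ∈ SpectralBall 2)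
    (hscal : ∀ j : Fin l, (j : ℕ) < k → A j = lam j • (1 : Matrix (Fin 2) (Fin 2) ℂ))
    (hnonscal : ∀ j : Fin l, k ≤ (j : ℕ) → ¬ IsScalarMatrix (A j))
    (φ : ℂ → Fin 2 → ℂ) (hφd : DifferentiableOn ℂ φ unitDisc)
    (hφm : Set.MapsTo φ unitDisc (SymPolydisc 2))
    (hφv : ∀ j, φ (α j) = sigmaCoeff 2 (A j))
    (hφder : ∀ j : Fin l, (j : ℕ) < k →
      deriv (fun z => φ z 1) (α j) = lam j * deriv (fun z => φ z 0) (α j)) :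
    ∃ ψ : ℂ → Matrix (Fin 2) (Fin 2) ℂ, MatHolo ψ ∧
      Set.MapsTo ψ unitDisc (SpectralBall 2) ∧ (∀ j, ψ (α j) = A j) := by
  have hs : DifferentiableOn ℂ (fun z => φ z 0) unitDisc := differentiableOn_pi.mp hφd 0
  have hp : DifferentiableOn ℂ (fun z => φ z 1) unitDisc := differentiableOn_pi.mp hφd 1
  have hsv : ∀ j, φ (α j) 0 = (A j).trace := by
    intro j; rw [hφv j, sigmaCoeff_two]; simp
  have hpv : ∀ j, φ (α j) 1 = (A j).det := by
    intro j; rw [hφv j, sigmaCoeff_two]; simp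
  have htr : ∀ j : Fin l, (j : ℕ) < k → (A j).trace = 2 * lam j := by
    intro j hj; rw [hscal j hj]
    simp [Matrix.trace_fin_two, Matrix.smul_apply, Matrix.one_apply]; ring
  have hdetv : ∀ j : Fin l, (j : ℕ) < k → (A j).det = lam j * lam j := by
    intro j hj; rw [hscal j hj]
    simp [Matrix.det_fin_two, Matrix.smul_apply, Matrix.one_apply]
    ring
  -- the Blaschke-type polynomial vanishing at scalar nodes
  set S : Finset (Fin l) := Finset.univ.filter (fun m : Fin l => (m : ℕ) < k) with hS
  set B : ℂ → ℂ := fun z => (∏ m ∈ S, (X - Polynomial.C (α m))).eval z with hB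
  have hBd : Differentiable ℂ B := (∏ m ∈ S, (X - Polynomial.C (α m))).differentiable
  have hBeval : ∀ z, B z = ∏ m ∈ S, (z - α m) := by
    intro z; rw [hB]; simp [Polynomial.eval_prod]
  have hBzero : ∀ z, B z = 0 ↔ ∃ m ∈ S, z = α m := by
    intro z
    rw [hBeval, Finset.prod_eq_zero_iff]
    simp [sub_eq_zero]
  have hmemS : ∀ m : Fin l, m ∈ S ↔ (m : ℕ) < k := by
    intro m; rw [hS]; simp
  have hBne : ∀ j : Fin l, k ≤ (j : ℕ) → B (α j) ≠ 0 := by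
    intro j hj hzero
    obtain ⟨m, hm, heq⟩ := (hBzero _).mp hzero
    rw [hmemS] at hm
    have := hαinj heq
    omega
  -- the nonvanishing correction factor
  have hwne : ∀ j : Fin l, (if (j : ℕ) < k then 1 else (B (α j))⁻¹) ≠ 0 := by
    intro j
    by_cases hj : (j : ℕ) < k
    · simp [hj]
    · simp only [if_neg hj]
      exact inv_ne_zero (hBne j (not_lt.mp hj))
  obtain ⟨E, hEd, hEv, hE0⟩ := exists_interp_ne α hαinj _ hwne
  set b : ℂ → ℂ := fun z => B z * E z with hbdef
  have hbd : Differentiable ℂ b := hBd.mul hEd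
  have hbscal : ∀ j : Fin l, (j : ℕ) < k → b (α j) = 0 := by
    intro j hj
    have : B (α j) = 0 := (hBzero _).mpr ⟨j, (hmemS j).mpr hj, rfl⟩
    rw [hbdef]; simp [this]
  have hbnon : ∀ j : Fin l, k ≤ (j : ℕ) → b (α j) = 1 := by
    intro j hj
    rw [hbdef]
    show B (α j) * E (α j) = 1
    rw [hEv j, if_neg (not_lt.mpr hj), mul_inv_cancel₀ (hBne j hj)]
  have hbzero : ∀ z, b z = 0 → ∃ m : Fin l, (m : ℕ) < k ∧ z = α m := by
    intro z hz
    rw [hbdef] at hz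
    rcases mul_eq_zero.mp hz with h | h
    · obtain ⟨m, hm, heq⟩ := (hBzero _).mp h
      exact ⟨m, (hmemS m).mp hm, heq⟩
    · exact absurd h (hE0 z)
  -- the diagonal deviation a
  obtain ⟨a, had, hav⟩ := exists_interp α hαinj
    (fun j => if (j : ℕ) < k then 0 else -((A j).trace) / 2)
  -- the function h = s²/4 - p - a²
  set h : ℂ → ℂ := fun z => φ z 0 * φ z 0 / 4 - φ z 1 - a z * a z with hhdef
  have hhd : DifferentiableOn ℂ h unitDisc :=
    (((hs.mul hs).div_const 4).sub hp).sub (had.differentiableOn.mul had.differentiableOn)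
  have hascal : ∀ j : Fin l, (j : ℕ) < k → a (α j) = 0 := by
    intro j hj; rw [hav j, if_pos hj]
  have hanon : ∀ j : Fin l, k ≤ (j : ℕ) → a (α j) = -((A j).trace) / 2 := by
    intro j hj; rw [hav j, if_neg (not_lt.mpr hj)]
  have hhscal : ∀ j : Fin l, (j : ℕ) < k → h (α j) = 0 := by
    intro j hj
    rw [hhdef]
    show φ (α j) 0 * φ (α j) 0 / 4 - φ (α j) 1 - a (α j) * a (α j) = 0
    rw [hsv j, hpv j, hascal j hj, htr j hj, hdetv j hj]; ring
  have hhnon : ∀ j : Fin l, k ≤ (j : ℕ) → h (α j) = -((A j).det) := by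
    intro j hj
    rw [hhdef]
    show φ (α j) 0 * φ (α j) 0 / 4 - φ (α j) 1 - a (α j) * a (α j) = -((A j).det)
    rw [hsv j, hpv j, hanon j hj]; ring
  have hhder : ∀ j : Fin l, (j : ℕ) < k → deriv h (α j) = 0 := by
    intro j hj
    have hsA : DifferentiableAt ℂ (fun z => φ z 0) (α j) := diffAt_of_diffOn hs (hαD j)
    have hpA : DifferentiableAt ℂ (fun z => φ z 1) (α j) := diffAt_of_diffOn hp (hαD j)
    have haA : DifferentiableAt ℂ a (α j) := had.differentiableAt
    have H : HasDerivAt h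
        ((deriv (fun z => φ z 0) (α j) * φ (α j) 0 + φ (α j) 0 * deriv (fun z => φ z 0) (α j)) / 4
          - deriv (fun z => φ z 1) (α j)
          - (deriv a (α j) * a (α j) + a (α j) * deriv a (α j))) (α j) :=
      (((hsA.hasDerivAt.mul hsA.hasDerivAt).div_const 4).sub hpA.hasDerivAt).sub
        (haA.hasDerivAt.mul haA.hasDerivAt)
    rw [H.deriv, hφder j hj, hsv j, htr j hj, hascal j hj]; ring
  -- the off-diagonal quotient c
  set c : ℂ → ℂ := fun z => h z / b z with hcdef
  have hcb : ∀ z, b z * c z = h z := by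
    intro z
    by_cases hz : b z = 0
    · obtain ⟨m, hm, rfl⟩ := hbzero z hz
      rw [hz, hhscal m hm, zero_mul]
    · rw [hcdef]; field_simp
  have hcscal : ∀ j : Fin l, (j : ℕ) < k → c (α j) = 0 := by
    intro j hj; rw [hcdef]
    show h (α j) / b (α j) = 0
    rw [hhscal j hj, zero_div]
  have hcnon : ∀ j : Fin l, k ≤ (j : ℕ) → c (α j) = -((A j).det) := by
    intro j hj; rw [hcdef]
    show h (α j) / b (α j) = -((A j).det)
    rw [hhnon j hj, hbnon j hj, div_one]
  have hcd : DifferentiableOn ℂ c unitDisc := by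
    intro z0 hz0
    by_cases hbz : b z0 = 0
    · obtain ⟨j0, hj0k, rfl⟩ := hbzero z0 hbz
      set Btil : ℂ → ℂ :=
        fun z => (∏ m ∈ S.erase j0, (X - Polynomial.C (α m))).eval z * E z with hBtil
      have hBtild : Differentiable ℂ Btil :=
        ((∏ m ∈ S.erase j0, (X - Polynomial.C (α m))).differentiable).mul hEd
      have hBtileval : ∀ z, Btil z = (∏ m ∈ S.erase j0, (z - α m)) * E z := by
        intro z; rw [hBtil]; simp [Polynomial.eval_prod]
      have hBtilne : Btil (α j0) ≠ 0 := by
        rw [hBtileval]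
        refine mul_ne_zero (Finset.prod_ne_zero_iff.mpr ?_) (hE0 _)
        intro m hm
        rw [sub_ne_zero]
        intro heq
        exact (Finset.ne_of_mem_erase hm) (hαinj heq).symm
      have hj0S : j0 ∈ S := (hmemS j0).mpr hj0k
      have hfact : ∀ z, b z = (z - α j0) * Btil z := by
        intro z
        rw [hbdef]
        show B z * E z = _
        rw [hBeval, ← Finset.mul_prod_erase S _ hj0S, hBtileval]
        ring
      have heqn : Set.EqOn c (fun z => dslope h (α j0) z / Btil z) {z | Btil z ≠ 0} := by
        intro z hz
        by_cases hzz : z = α j0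
        · subst hzz
          show c (α j0) = dslope h (α j0) (α j0) / Btil (α j0)
          rw [dslope_same, hhder j0 hj0k, zero_div]
          exact hcscal j0 hj0k
        · show c z = dslope h (α j0) z / Btil z
          rw [dslope_of_ne _ hzz, slope_def_field, hhscal j0 hj0k, sub_zero, hcdef]
          show h z / b z = _
          rw [hfact z, div_div]
      have hUnhds : {z | Btil z ≠ 0} ∈ nhds (α j0) :=
        (isOpen_compl_singleton.preimage hBtild.continuous).mem_nhds hBtilne
      have hdsl : DifferentiableAt ℂ (dslope h (α j0)) (α j0) :=
        ((Complex.differentiableOn_dslope (isOpen_unitDisc.mem_nhds (hαD j0))).mpr hhd).differentiableAt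
          (isOpen_unitDisc.mem_nhds (hαD j0))
      have : DifferentiableAt ℂ c (α j0) :=
        (hdsl.div hBtild.differentiableAt hBtilne).congr_of_eventuallyEq
          (Filter.eventuallyEq_of_mem hUnhds heqn)
      exact this.differentiableWithinAt
    · exact (((hhd.differentiableAt (isOpen_unitDisc.mem_nhds hz0)).div
        hbd.differentiableAt hbz)).differentiableWithinAt
  -- the model map C
  set Cm : ℂ → Matrix (Fin 2) (Fin 2) ℂ :=
    fun z => !![φ z 0 / 2 + a z, c z; b z, φ z 0 / 2 - a z] with hCm
  have hCtr : ∀ z, (Cm z).trace = φ z 0 := by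
    intro z; rw [hCm]
    show (!![φ z 0 / 2 + a z, c z; b z, φ z 0 / 2 - a z]).trace = φ z 0
    rw [Matrix.trace_fin_two]; simp
  have hCdet : ∀ z, (Cm z).det = φ z 1 := by
    intro z; rw [hCm]
    show (!![φ z 0 / 2 + a z, c z; b z, φ z 0 / 2 - a z]).det = φ z 1
    rw [Matrix.det_fin_two]; simp
    linear_combination (-1 : ℂ) * hcb z
  have hCmem : ∀ z ∈ unitDisc, Cm z ∈ SpectralBall 2 := by
    intro z hz
    obtain ⟨A0, hA0, hA0v⟩ := hφm hz
    rw [sigmaCoeff_two] at hA0v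
    have h1 : A0.trace = (Cm z).trace := by
      rw [hCtr z, ← congrFun hA0v 0]; simp
    have h2 : A0.det = (Cm z).det := by
      rw [hCdet z, ← congrFun hA0v 1]; simp
    exact mem_spectralBall_congr h1 h2 hA0
  have hCholo : MatHolo Cm :=
    matHolo_of ((hs.div_const 2).add had.differentiableOn) hcd hbd.differentiableOn
      ((hs.div_const 2).sub had.differentiableOn)
  -- the conjugators
  have hPex : ∀ j : Fin l, ∃ P : Matrix (Fin 2) (Fin 2) ℂ, P.det ≠ 0 ∧
      (k ≤ (j : ℕ) → A j * P = P * !![0, -(A j).det; 1, (A j).trace]) := by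
    intro j
    by_cases hj : (j : ℕ) < k
    · exact ⟨1, by simp, fun hge => absurd hge (not_le.mpr hj)⟩
    · obtain ⟨P, h1, h2⟩ := exists_conjugator (A j) (hnonscal j (not_lt.mp hj))
      exact ⟨P, h1, fun _ => h2⟩
  choose P hPdet hPconj using hPex
  obtain ⟨M, Mi, hMd, hMid, hMMi, hMiM, hMv⟩ := exists_entire_conj α hαinj P hPdet
  refine ⟨fun z => M z * Cm z * Mi z, ?_, ?_, ?_⟩
  · exact matHolo_mul (matHolo_mul (fun i j => (hMd i j).differentiableOn) hCholo)
      (fun i j => (hMid i j).differentiableOn)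
  · intro z hz
    have h1 : (Cm z).trace = (M z * Cm z * Mi z).trace := by
      rw [Matrix.trace_mul_cycle, hMiM z, one_mul]
    have h2 : (Cm z).det = (M z * Cm z * Mi z).det := by
      rw [Matrix.det_mul, Matrix.det_mul]
      have hd1 : (M z).det * (Mi z).det = 1 := by
        rw [← Matrix.det_mul, hMMi z, Matrix.det_one]
      linear_combination (-(Cm z).det) * hd1
    exact mem_spectralBall_congr h1 h2 (hCmem z hz)
  · intro j
    by_cases hj : (j : ℕ) < k
    · have hC : Cm (α j) = lam j • 1 := by
        ext i i'
        rw [hCm]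
        fin_cases i <;> fin_cases i' <;>
          simp [Matrix.smul_apply, Matrix.one_apply, hbscal j hj, hcscal j hj,
            hascal j hj, hsv j, htr j hj] <;> ring
      show M (α j) * Cm (α j) * Mi (α j) = A j
      rw [hC, hscal j hj, mul_smul_comm, smul_mul_assoc, mul_one, hMMi]
    · have hj' : k ≤ (j : ℕ) := not_lt.mp hj
      have hC : Cm (α j) = !![0, -(A j).det; 1, (A j).trace] := by
        ext i i'
        rw [hCm]
        fin_cases i <;> fin_cases i' <;>
          simp [hbnon j hj', hcnon j hj', hanon j hj', hsv j] <;> ring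
      show M (α j) * Cm (α j) * Mi (α j) = A j
      rw [hC, hMv j, ← hPconj j hj', mul_assoc, ← hMv j, hMMi (α j), mul_one]


/-- Corollary 2: solvability of the spectral Nevanlinna–Pick
problem on `Ω_2` is equivalent to a modified interpolation problem on `𝔾_2`. -/
theorem stmt_1 (k l : ℕ) (hkl : k ≤ l)
    (α : Fin l → ℂ) (hαinj : Function.Injective α) (hαD : ∀ j, α j ∈ unitDisc)
    (A : Fin l → Matrix (Fin 2) (Fin 2) ℂ) (lam : Fin l → ℂ)
    (hA : ∀ j, A j ∈ SpectralBall 2)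
    (hscal : ∀ j : Fin l, (j : ℕ) < k → A j = lam j • (1 : Matrix (Fin 2) (Fin 2) ℂ))
    (hnonscal : ∀ j : Fin l, k ≤ (j : ℕ) → ¬ IsScalarMatrix (A j)) :
    (∃ ψ : ℂ → Matrix (Fin 2) (Fin 2) ℂ, MatHolo ψ ∧
        Set.MapsTo ψ unitDisc (SpectralBall 2) ∧
        (∀ j, ψ (α j) = A j)) ↔
      (∃ φ : ℂ → Fin 2 → ℂ, DifferentiableOn ℂ φ unitDisc ∧
        Set.MapsTo φ unitDisc (SymPolydisc 2) ∧
        (∀ j, φ (α j) = sigmaCoeff 2 (A j)) ∧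
        (∀ j : Fin l, (j : ℕ) < k →
          deriv (fun z => φ z 1) (α j) = lam j * deriv (fun z => φ z 0) (α j))) := by
  constructor
  · rintro ⟨ψ, h1, h2, h3⟩
    exact forward_dir k l α hαD A lam hscal ψ h1 h2 h3
  · rintro ⟨φ, h1, h2, h3, h4⟩
    exact backward_dir k l α hαinj hαD A lam hA hscal hnonscal φ h1 h2 h3 h4
end
end

section
/- Let λ ∈ ℂ, B = λI ∈ M_2(ℂ), and let φ = (φ_1,φ_2) : 𝔻 → 𝔾_2 be holomorphic with φ(0) = 0. Then there exists a holomorphic map ψ : 𝔻 → Ω_2 satisfying σ∘ψ = φ, ψ(0) = 0 and ψ′(0) = B if and only if φ_1′(0) = 2λ, φ_2′(0) = 0, φ_2″(0) = 2λ², and φ_2‴(0) = 3λ φ_1″(0). -/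
open Metric Matrix Polynomial Set Filter

noncomputable section

open Topology in
lemma zero_mem_unitDisc : (0:ℂ) ∈ unitDisc := by simp [unitDisc]

open Topology in
lemma unitDisc_mem_nhds : unitDisc ∈ 𝓝 (0:ℂ) := isOpen_ball.mem_nhds zero_mem_unitDisc

open Topology in
lemma aux_deriv_analytic {f : ℂ → ℂ} (hf : AnalyticAt ℂ f 0) : AnalyticAt ℂ (deriv f) 0 := by
  rcases _root_.eventually_nhds_iff.mp hf.eventually_analyticAt with ⟨s, hs, hso, h0⟩
  exact (AnalyticOnNhd.deriv (fun y hy => hs y hy)) 0 h0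

open Topology in
lemma ev_mul {f g : ℂ → ℂ} (hf : AnalyticAt ℂ f 0) (hg : AnalyticAt ℂ g 0) :
    deriv (fun z => f z * g z) =ᶠ[𝓝 (0:ℂ)] fun z => deriv f z * g z + f z * deriv g z := by
  filter_upwards [hf.eventually_analyticAt, hg.eventually_analyticAt] with z hfz hgz
  exact deriv_mul hfz.differentiableAt hgz.differentiableAt

open Topology in
lemma ev_add {f g : ℂ → ℂ} (hf : AnalyticAt ℂ f 0) (hg : AnalyticAt ℂ g 0) :
    deriv (fun z => f z + g z) =ᶠ[𝓝 (0:ℂ)] fun z => deriv f z + deriv g z := by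
  filter_upwards [hf.eventually_analyticAt, hg.eventually_analyticAt] with z hfz hgz
  exact deriv_add hfz.differentiableAt hgz.differentiableAt

open Topology in
lemma ev_sub {f g : ℂ → ℂ} (hf : AnalyticAt ℂ f 0) (hg : AnalyticAt ℂ g 0) :
    deriv (fun z => f z - g z) =ᶠ[𝓝 (0:ℂ)] fun z => deriv f z - deriv g z := by
  filter_upwards [hf.eventually_analyticAt, hg.eventually_analyticAt] with z hfz hgz
  exact deriv_sub hfz.differentiableAt hgz.differentiableAt

lemma iter2 (f : ℂ → ℂ) : iteratedDeriv 2 f (0:ℂ) = deriv (deriv f) 0 := by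
  rw [show (2:ℕ) = 1+1 from rfl, iteratedDeriv_succ, iteratedDeriv_one]

lemma iter3 (f : ℂ → ℂ) : iteratedDeriv 3 f (0:ℂ) = deriv (deriv (deriv f)) 0 := by
  rw [show (3:ℕ) = 2+1 from rfl, iteratedDeriv_succ, show (2:ℕ) = 1+1 from rfl,
    iteratedDeriv_succ, iteratedDeriv_one]

lemma mem_spectrum_two (M : Matrix (Fin 2) (Fin 2) ℂ) (μ : ℂ) :
    μ ∈ spectrum ℂ M ↔ μ^2 - M.trace * μ + M.det = 0 := by
  rw [spectrum.mem_iff, Matrix.isUnit_iff_isUnit_det, isUnit_iff_ne_zero, not_ne_iff]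
  have : (algebraMap ℂ (Matrix (Fin 2) (Fin 2) ℂ) μ - M).det
      = μ^2 - M.trace * μ + M.det := by
    simp [Matrix.det_fin_two, Matrix.trace_fin_two, Matrix.algebraMap_matrix_apply]
    ring
  rw [this]

lemma sigmaCoeff_two_zero (M : Matrix (Fin 2) (Fin 2) ℂ) : sigmaCoeff 2 M 0 = M.trace := by
  have h := Matrix.trace_eq_neg_charpoly_coeff M
  simp only [Fintype.card_fin] at h
  simp [sigmaCoeff, h]

lemma sigmaCoeff_two_one (M : Matrix (Fin 2) (Fin 2) ℂ) : sigmaCoeff 2 M 1 = M.det := by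
  have h := Matrix.det_eq_sign_charpoly_coeff M
  simp only [Fintype.card_fin] at h
  simp [sigmaCoeff, h]

lemma leib_mul {f g : ℂ → ℂ} (hf : AnalyticAt ℂ f 0) (hg : AnalyticAt ℂ g 0) :
    deriv (fun z => f z * g z) 0 = deriv f 0 * g 0 + f 0 * deriv g 0 ∧
    deriv (deriv (fun z => f z * g z)) 0
      = deriv (deriv f) 0 * g 0 + 2 * deriv f 0 * deriv g 0 + f 0 * deriv (deriv g) 0 ∧
    deriv (deriv (deriv (fun z => f z * g z))) 0
      = deriv (deriv (deriv f)) 0 * g 0 + 3 * deriv (deriv f) 0 * deriv g 0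
        + 3 * deriv f 0 * deriv (deriv g) 0 + f 0 * deriv (deriv (deriv g)) 0 := by
  have hf1 := aux_deriv_analytic hf
  have hg1 := aux_deriv_analytic hg
  have hf2 := aux_deriv_analytic hf1
  have hg2 := aux_deriv_analytic hg1
  have Hf : HasDerivAt f (deriv f 0) 0 := hf.differentiableAt.hasDerivAt
  have Hg : HasDerivAt g (deriv g 0) 0 := hg.differentiableAt.hasDerivAt
  have Hf1 : HasDerivAt (deriv f) (deriv (deriv f) 0) 0 := hf1.differentiableAt.hasDerivAt
  have Hg1 : HasDerivAt (deriv g) (deriv (deriv g) 0) 0 := hg1.differentiableAt.hasDerivAt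
  have Hf2 : HasDerivAt (deriv (deriv f)) (deriv (deriv (deriv f)) 0) 0 :=
    hf2.differentiableAt.hasDerivAt
  have Hg2 : HasDerivAt (deriv (deriv g)) (deriv (deriv (deriv g)) 0) 0 :=
    hg2.differentiableAt.hasDerivAt
  have e1 : deriv (fun z => f z * g z) =ᶠ[nhds (0:ℂ)]
      fun z => deriv f z * g z + f z * deriv g z := ev_mul hf hg
  have e2 : deriv (fun z => deriv f z * g z + f z * deriv g z) =ᶠ[nhds (0:ℂ)]
      fun z => (deriv (deriv f) z * g z + deriv f z * deriv g z)
        + (deriv f z * deriv g z + f z * deriv (deriv g) z) :=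
    (ev_add (hf1.mul hg) (hf.mul hg1)).trans
      (Filter.EventuallyEq.add (ev_mul hf1 hg) (ev_mul hf hg1))
  refine ⟨(Hf.mul Hg).deriv, ?_, ?_⟩
  · rw [e1.deriv_eq]
    have := ((Hf1.mul Hg).add (Hf.mul Hg1)).deriv
    exact this.trans (by ring)
  · rw [(e1.deriv.trans e2).deriv_eq]
    have := (((Hf2.mul Hg).add (Hf1.mul Hg1)).add ((Hf1.mul Hg1).add (Hf.mul Hg2))).deriv
    exact this.trans (by ring)

lemma leib_sub {f g : ℂ → ℂ} (hf : AnalyticAt ℂ f 0) (hg : AnalyticAt ℂ g 0) :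
    deriv (fun z => f z - g z) 0 = deriv f 0 - deriv g 0 ∧
    deriv (deriv (fun z => f z - g z)) 0 = deriv (deriv f) 0 - deriv (deriv g) 0 ∧
    deriv (deriv (deriv (fun z => f z - g z))) 0
      = deriv (deriv (deriv f)) 0 - deriv (deriv (deriv g)) 0 := by
  have hf1 := aux_deriv_analytic hf
  have hg1 := aux_deriv_analytic hg
  have e1 := ev_sub hf hg
  have e2 := ev_sub hf1 hg1
  refine ⟨deriv_sub hf.differentiableAt hg.differentiableAt, ?_, ?_⟩
  · rw [e1.deriv_eq]
    exact deriv_sub hf1.differentiableAt hg1.differentiableAt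
  · rw [(e1.deriv.trans e2).deriv_eq]
    exact deriv_sub (aux_deriv_analytic hf1).differentiableAt
      (aux_deriv_analytic hg1).differentiableAt

lemma leib_add {f g : ℂ → ℂ} (hf : AnalyticAt ℂ f 0) (hg : AnalyticAt ℂ g 0) :
    deriv (fun z => f z + g z) 0 = deriv f 0 + deriv g 0 ∧
    deriv (deriv (fun z => f z + g z)) 0 = deriv (deriv f) 0 + deriv (deriv g) 0 ∧
    deriv (deriv (deriv (fun z => f z + g z))) 0
      = deriv (deriv (deriv f)) 0 + deriv (deriv (deriv g)) 0 := by
  have hf1 := aux_deriv_analytic hf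
  have hg1 := aux_deriv_analytic hg
  have e1 := ev_add hf hg
  have e2 := ev_add hf1 hg1
  refine ⟨deriv_add hf.differentiableAt hg.differentiableAt, ?_, ?_⟩
  · rw [e1.deriv_eq]
    exact deriv_add hf1.differentiableAt hg1.differentiableAt
  · rw [(e1.deriv.trans e2).deriv_eq]
    exact deriv_add (aux_deriv_analytic hf1).differentiableAt
      (aux_deriv_analytic hg1).differentiableAt

lemma sq_chain : deriv (fun z:ℂ => z^2) 0 = 0 ∧ deriv (deriv (fun z:ℂ => z^2)) 0 = 2
    ∧ deriv (deriv (deriv (fun z:ℂ => z^2))) 0 = 0 := by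
  have d1 : deriv (fun z:ℂ => z^2) = fun z => 2*z := by
    funext z; rw [deriv_pow_field]; push_cast; ring
  have d2 : deriv (fun z:ℂ => 2*z) = fun _ => 2 := by
    funext z
    rw [deriv_const_mul _ differentiableAt_fun_id]
    simp
  rw [d1, d2]
  refine ⟨by simp, by simp, by simp⟩

lemma const_chain (c : ℂ) : deriv (fun _:ℂ => c) 0 = 0 ∧ deriv (deriv (fun _:ℂ => c)) 0 = 0
    ∧ deriv (deriv (deriv (fun _:ℂ => c))) 0 = 0 := by
  simp [deriv_const']



/-- Proposition 9: lifting of the spectral Carathéodory–Fejér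
problem on `Ω_2` at `0` with scalar derivative datum `λI`. -/
theorem stmt_12 (lam : ℂ)
    (φ : ℂ → Fin 2 → ℂ) (hφ : DifferentiableOn ℂ φ unitDisc)
    (hφmaps : Set.MapsTo φ unitDisc (SymPolydisc 2)) (hφ0 : φ 0 = 0) :
    (∃ ψ : ℂ → Matrix (Fin 2) (Fin 2) ℂ, MatHolo ψ ∧
        Set.MapsTo ψ unitDisc (SpectralBall 2) ∧
        (∀ z ∈ unitDisc, sigmaCoeff 2 (ψ z) = φ z) ∧
        ψ 0 = 0 ∧ (∀ i j : Fin 2, deriv (fun z => ψ z i j) 0 =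
          (lam • (1 : Matrix (Fin 2) (Fin 2) ℂ)) i j)) ↔
      (deriv (fun z => φ z 0) 0 = 2 * lam ∧
        deriv (fun z => φ z 1) 0 = 0 ∧
        iteratedDeriv 2 (fun z => φ z 1) 0 = 2 * lam ^ 2 ∧
        iteratedDeriv 3 (fun z => φ z 1) 0
          = 3 * lam * iteratedDeriv 2 (fun z => φ z 0) 0) := by
  constructor
  · rintro ⟨ψ, hψH, hψmaps, hσ, hψ0, hψd⟩
    set a : ℂ → ℂ := fun z => ψ z 0 0 with ha_def
    set b : ℂ → ℂ := fun z => ψ z 0 1 with hb_def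
    set c : ℂ → ℂ := fun z => ψ z 1 0 with hc_def
    set d : ℂ → ℂ := fun z => ψ z 1 1 with hd_def
    have haA : AnalyticAt ℂ a 0 := (hψH 0 0).analyticAt unitDisc_mem_nhds
    have hbA : AnalyticAt ℂ b 0 := (hψH 0 1).analyticAt unitDisc_mem_nhds
    have hcA : AnalyticAt ℂ c 0 := (hψH 1 0).analyticAt unitDisc_mem_nhds
    have hdA : AnalyticAt ℂ d 0 := (hψH 1 1).analyticAt unitDisc_mem_nhds
    have a0 : a 0 = 0 := by simp [ha_def, hψ0]
    have b0 : b 0 = 0 := by simp [hb_def, hψ0]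
    have c0 : c 0 = 0 := by simp [hc_def, hψ0]
    have d0 : d 0 = 0 := by simp [hd_def, hψ0]
    have aD : deriv a 0 = lam := by
      rw [ha_def]
      rw [hψd 0 0]
      simp [Matrix.smul_apply, Matrix.one_apply]
    have bD : deriv b 0 = 0 := by
      rw [hb_def, hψd 0 1]
      simp [Matrix.smul_apply, Matrix.one_apply]
    have cD : deriv c 0 = 0 := by
      rw [hc_def, hψd 1 0]
      simp [Matrix.smul_apply, Matrix.one_apply]
    have dD : deriv d 0 = lam := by
      rw [hd_def, hψd 1 1]
      simp [Matrix.smul_apply, Matrix.one_apply]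
    have E0 : (fun z => φ z 0) =ᶠ[nhds (0:ℂ)] fun z => a z + d z := by
      filter_upwards [unitDisc_mem_nhds] with z hz
      rw [← hσ z hz, sigmaCoeff_two_zero, Matrix.trace_fin_two]
    have E1 : (fun z => φ z 1) =ᶠ[nhds (0:ℂ)] fun z => a z * d z - b z * c z := by
      filter_upwards [unitDisc_mem_nhds] with z hz
      rw [← hσ z hz, sigmaCoeff_two_one, Matrix.det_fin_two]
    obtain ⟨ad1, ad2, ad3⟩ := leib_mul haA hdA
    obtain ⟨bc1, bc2, bc3⟩ := leib_mul hbA hcA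
    obtain ⟨s1, s2, s3⟩ := leib_sub (f := fun z => a z * d z) (g := fun z => b z * c z) (haA.mul hdA) (hbA.mul hcA)
    obtain ⟨p1, p2, p3⟩ := leib_add haA hdA
    refine ⟨?_, ?_, ?_, ?_⟩
    · rw [E0.deriv_eq, p1, aD, dD]; ring
    · rw [E1.deriv_eq, s1, ad1, bc1, a0, b0, c0, d0, aD, bD, cD, dD]; ring
    · rw [iter2, (E1.deriv).deriv_eq, s2, ad2, bc2, a0, b0, c0, d0, aD, bD, cD, dD]; ring
    · rw [iter3, ((E1.deriv).deriv).deriv_eq, s3, ad3, bc3,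
        iter2, (E0.deriv).deriv_eq, p2, a0, b0, c0, d0, aD, bD, cD, dD]
      ring
  · rintro ⟨h1, h2, h3, h4⟩
    set u : ℂ → ℂ := fun z => φ z 0 with hu_def
    set v : ℂ → ℂ := fun z => φ z 1 with hv_def
    have hud : DifferentiableOn ℂ u unitDisc := fun z hz =>
      differentiableWithinAt_pi.mp (hφ z hz) 0
    have hvd : DifferentiableOn ℂ v unitDisc := fun z hz =>
      differentiableWithinAt_pi.mp (hφ z hz) 1
    have huA : AnalyticAt ℂ u 0 := hud.analyticAt unitDisc_mem_nhds
    have hvA : AnalyticAt ℂ v 0 := hvd.analyticAt unitDisc_mem_nhds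
    have u0 : u 0 = 0 := by rw [hu_def]; simp [hφ0]
    have v0 : v 0 = 0 := by rw [hv_def]; simp [hφ0]
    rw [iter2] at h3
    rw [iter3, iter2] at h4
    set m : ℂ → ℂ := fun z => u z * u z with hm_def
    have hmA : AnalyticAt ℂ m 0 := huA.mul huA
    set w : ℂ → ℂ := fun z => m z * (4:ℂ)⁻¹ with hw_def
    have hwA : AnalyticAt ℂ w 0 := hmA.mul analyticAt_const
    set h : ℂ → ℂ := fun z => w z - v z with hh_def
    have hhd : DifferentiableOn ℂ h unitDisc := (((hud.mul hud).mul_const _).sub hvd)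
    have hhA : AnalyticAt ℂ h 0 := hhd.analyticAt unitDisc_mem_nhds
    obtain ⟨m1, m2, m3⟩ := leib_mul huA huA
    rw [← hm_def] at m1 m2 m3
    obtain ⟨w1, w2, w3⟩ := leib_mul hmA (analyticAt_const (v := (4:ℂ)⁻¹) (x := (0:ℂ)))
    rw [← hw_def] at w1 w2 w3
    obtain ⟨cc1, cc2, cc3⟩ := const_chain ((4:ℂ)⁻¹)
    rw [cc1] at w1 w2 w3
    rw [cc2] at w2 w3
    rw [cc3] at w3
    obtain ⟨hd1, hd2, hd3⟩ := leib_sub hwA hvA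
    rw [← hh_def] at hd1 hd2 hd3
    have h00 : h 0 = 0 := by simp [hh_def, hw_def, hm_def, u0, v0]
    have hD1 : deriv h 0 = 0 := by
      have m0 : m 0 = 0 := by simp [hm_def, u0]
      rw [hd1, w1, m1, u0, h2, m0]; ring
    have hD2 : deriv (deriv h) 0 = 0 := by
      rw [hd2, w2, m2, u0, h1, h3]; ring
    have hD3 : deriv (deriv (deriv h)) 0 = 0 := by
      rw [hd3, w3, m3, u0, h1, h4]; ring
    set gg : ℂ → ℂ := dslope (dslope h 0) 0 with hgg_def
    have hggd : DifferentiableOn ℂ gg unitDisc := by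
      rw [hgg_def]
      exact (Complex.differentiableOn_dslope unitDisc_mem_nhds).mpr
        ((Complex.differentiableOn_dslope unitDisc_mem_nhds).mpr hhd)
    have hggA : AnalyticAt ℂ gg 0 := hggd.analyticAt unitDisc_mem_nhds
    set q : ℂ → ℂ := fun z => z^2 with hq_def
    have hqA : AnalyticAt ℂ q 0 := by rw [hq_def]; exact analyticAt_id.pow 2
    have hkey : ∀ z : ℂ, q z * gg z = h z := by
      intro z
      rcases eq_or_ne z 0 with rfl | hz
      · simp [hq_def, h00]
      · have e1 : dslope h 0 z = (h z - h 0) / (z - 0) := by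
          rw [dslope_of_ne _ hz, slope_def_field]
        have e2 : gg z = (dslope h 0 z - dslope h 0 0) / (z - 0) := by
          rw [hgg_def, dslope_of_ne _ hz, slope_def_field]
        rw [hq_def, e2, e1, dslope_same, hD1, h00]
        field_simp
        ring
    have hfun : h = fun z => q z * gg z := funext fun z => (hkey z).symm
    obtain ⟨k1, k2, k3⟩ := leib_mul hqA hggA
    rw [← hfun] at k1 k2 k3
    obtain ⟨sq1, sq2, sq3⟩ := sq_chain
    rw [← hq_def] at sq1 sq2 sq3
    have q00 : q 0 = 0 := by simp [hq_def]
    have gg0 : gg 0 = 0 := by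
      have e : deriv (deriv h) 0 = 2 * gg 0 := by rw [k2, sq1, sq2, q00]; ring
      have e2 : 2 * gg 0 = 0 := by rw [← e, hD2]
      linear_combination e2 / 2
    have ggD : deriv gg 0 = 0 := by
      have e : deriv (deriv (deriv h)) 0 = 6 * deriv gg 0 := by
        rw [k3, sq1, sq2, sq3, q00]; ring
      have e2 : 6 * deriv gg 0 = 0 := by rw [← e, hD3]
      linear_combination e2 / 6
    set ψ : ℂ → Matrix (Fin 2) (Fin 2) ℂ := fun z => !![u z / 2, q z; gg z, u z / 2]
      with hψ_def
    have entry00 : (fun z => ψ z 0 0) = fun z => u z / 2 := by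
      funext z; simp [hψ_def]
    have entry01 : (fun z => ψ z 0 1) = q := by
      funext z; simp [hψ_def]
    have entry10 : (fun z => ψ z 1 0) = gg := by
      funext z; simp [hψ_def]
    have entry11 : (fun z => ψ z 1 1) = fun z => u z / 2 := by
      funext z; simp [hψ_def]
    have htr : ∀ z, (ψ z).trace = u z := by
      intro z
      rw [Matrix.trace_fin_two]
      have h1 := congrFun entry00 z
      have h2 := congrFun entry11 z
      try simp only [] at h1 h2
      rw [h1, h2]; ring
    have hdet : ∀ z, (ψ z).det = v z := by
      intro z
      rw [Matrix.det_fin_two]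
      have e00 := congrFun entry00 z
      have e01 := congrFun entry01 z
      have e10 := congrFun entry10 z
      have e11 := congrFun entry11 z
      try simp only [] at e00 e01 e10 e11
      rw [e00, e01, e10, e11]
      have := hkey z
      have hz : h z = u z * u z * (4:ℂ)⁻¹ - v z := by rw [hh_def, hw_def, hm_def]
      rw [hz] at this
      linear_combination -this
    refine ⟨ψ, ?_, ?_, ?_, ?_, ?_⟩
    · intro i j
      fin_cases i <;> fin_cases j
      · show DifferentiableOn ℂ (fun z => ψ z 0 0) unitDisc
        rw [entry00]; exact hud.div_const 2
      · show DifferentiableOn ℂ (fun z => ψ z 0 1) unitDisc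
        rw [entry01, hq_def]; exact (differentiable_pow 2).differentiableOn
      · show DifferentiableOn ℂ (fun z => ψ z 1 0) unitDisc
        rw [entry10]; exact hggd
      · show DifferentiableOn ℂ (fun z => ψ z 1 1) unitDisc
        rw [entry11]; exact hud.div_const 2
    · intro z hz μ hμ
      obtain ⟨A, hA, hAeq⟩ := hφmaps hz
      have htrA : A.trace = u z := by
        rw [← sigmaCoeff_two_zero, hAeq]
      have hdetA : A.det = v z := by
        rw [← sigmaCoeff_two_one, hAeq]
      have := (mem_spectrum_two (ψ z) μ).mp hμ
      rw [htr z, hdet z] at this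
      exact hA μ ((mem_spectrum_two A μ).mpr (by rw [htrA, hdetA]; exact this))
    · intro z hz
      funext i
      fin_cases i
      · show sigmaCoeff 2 (ψ z) 0 = φ z 0
        rw [sigmaCoeff_two_zero, htr z]
      · show sigmaCoeff 2 (ψ z) 1 = φ z 1
        rw [sigmaCoeff_two_one, hdet z]
    · have e00 : ψ 0 0 0 = u 0 / 2 := congrFun entry00 0
      have e01 : ψ 0 0 1 = q 0 := congrFun entry01 0
      have e10 : ψ 0 1 0 = gg 0 := congrFun entry10 0
      have e11 : ψ 0 1 1 = u 0 / 2 := congrFun entry11 0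
      ext i j
      fin_cases i <;> fin_cases j
      · show ψ 0 0 0 = (0 : Matrix (Fin 2) (Fin 2) ℂ) 0 0
        rw [e00]; simp [u0]
      · show ψ 0 0 1 = (0 : Matrix (Fin 2) (Fin 2) ℂ) 0 1
        rw [e01]; simp [q00]
      · show ψ 0 1 0 = (0 : Matrix (Fin 2) (Fin 2) ℂ) 1 0
        rw [e10]; simp [gg0]
      · show ψ 0 1 1 = (0 : Matrix (Fin 2) (Fin 2) ℂ) 1 1
        rw [e11]; simp [u0]
    · intro i j
      fin_cases i <;> fin_cases j
      · show deriv (fun z => ψ z 0 0) 0 = (lam • (1 : Matrix (Fin 2) (Fin 2) ℂ)) 0 0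
        rw [entry00, deriv_div_const, h1]
        simp [Matrix.smul_apply, Matrix.one_apply]
      · show deriv (fun z => ψ z 0 1) 0 = (lam • (1 : Matrix (Fin 2) (Fin 2) ℂ)) 0 1
        rw [entry01, sq1]
        simp [Matrix.smul_apply, Matrix.one_apply]
      · show deriv (fun z => ψ z 1 0) 0 = (lam • (1 : Matrix (Fin 2) (Fin 2) ℂ)) 1 0
        rw [entry10, ggD]
        simp [Matrix.smul_apply, Matrix.one_apply]
      · show deriv (fun z => ψ z 1 1) 0 = (lam • (1 : Matrix (Fin 2) (Fin 2) ℂ)) 1 1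
        rw [entry11, deriv_div_const, h1]
        simp [Matrix.smul_apply, Matrix.one_apply]
end
end

section
/- Let λ ∈ ℂ with λ ≠ 0, B = λI ∈ M_3(ℂ), and let φ = (φ_1,φ_2,φ_3) : 𝔻 → 𝔾_3 be holomorphic with φ(0) = 0. Then there exists a holomorphic map ψ : 𝔻 → Ω_3 satisfying σ∘ψ = φ, ψ(0) = 0 and ψ′(0) = B if and only if: φ_1′(0) = 3λ, φ_2′(0) = 0, φ_2″(0)/2 = 3λ², φ_3′(0) = φ_3″(0) = 0, φ_3‴(0)/3! = λ³, φ_2‴(0)/3! = λ φ_1″(0), φ_3⁽⁴⁾(0)/4! = λ² φ_1″(0)/2, and φ_3⁽⁵⁾(0)/5! − λ φ_2⁽⁴⁾(0)/4! + λ² φ_1‴(0)/3! = 0. -/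
open Metric Matrix Polynomial Set Filter Function FormalMultilinearSeries Topology

noncomputable section

namespace CFhelp
open Nat

lemma mem0 : (0:ℂ) ∈ unitDisc := by simp [unitDisc]

lemma nhds0 : unitDisc ∈ 𝓝 (0:ℂ) := isOpen_ball.mem_nhds mem0

lemma hd_anal {f : ℂ → ℂ} (hf : DifferentiableOn ℂ f unitDisc) : AnalyticAt ℂ f 0 :=
  hf.analyticAt nhds0

lemma coeff_eq {f : ℂ → ℂ} {p : FormalMultilinearSeries ℂ ℂ ℂ}
    (hp : HasFPowerSeriesAt f p 0) (n : ℕ) :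
    iteratedDeriv n f 0 = (n ! : ℂ) * p.coeff n := by
  obtain ⟨r, hr⟩ := hp
  have h := hr.factorial_smul (1:ℂ) n
  rw [iteratedDeriv_eq_iteratedFDeriv, ← h, nsmul_eq_mul]
  rfl

lemma T_dslope {f : ℂ → ℂ} (hf : AnalyticAt ℂ f 0) (n : ℕ) :
    iteratedDeriv (n+1) f 0 = (n+1 : ℂ) * iteratedDeriv n (dslope f 0) 0 := by
  obtain ⟨p, hp⟩ := hf
  rw [coeff_eq hp, coeff_eq hp.has_fpower_series_dslope_fslope, coeff_fslope]
  rw [Nat.factorial_succ]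
  push_cast
  ring

lemma dslope_zmul {g : ℂ → ℂ} (hg : DifferentiableAt ℂ g 0) :
    dslope (fun z => z * g z) 0 = g := by
  funext z
  rcases eq_or_ne z 0 with rfl | hz
  · rw [dslope_same]
    have : deriv (fun z : ℂ => z * g z) 0 = deriv (fun z : ℂ => z) 0 * g 0 + 0 * deriv g 0 :=
      deriv_fun_mul differentiableAt_id hg
    simpa using this
  · rw [dslope_of_ne _ hz, slope_def_field]
    field_simp; ring


lemma anal_dslope {f : ℂ → ℂ} (hf : AnalyticAt ℂ f 0) : AnalyticAt ℂ (dslope f 0) 0 := by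
  obtain ⟨p, hp⟩ := hf
  exact ⟨p.fslope, hp.has_fpower_series_dslope_fslope⟩

lemma T_add {f g : ℂ → ℂ} (hf : AnalyticAt ℂ f 0) (hg : AnalyticAt ℂ g 0) (n : ℕ) :
    iteratedDeriv n (fun z => f z + g z) 0 = iteratedDeriv n f 0 + iteratedDeriv n g 0 := by
  obtain ⟨p, hp⟩ := hf
  obtain ⟨q, hq⟩ := hg
  have hpq : HasFPowerSeriesAt (fun z => f z + g z) (p + q) 0 := hp.add hq
  rw [coeff_eq hp, coeff_eq hq, coeff_eq hpq]
  have : (p + q).coeff n = p.coeff n + q.coeff n := rfl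
  rw [this]; ring

lemma T_sub {f g : ℂ → ℂ} (hf : AnalyticAt ℂ f 0) (hg : AnalyticAt ℂ g 0) (n : ℕ) :
    iteratedDeriv n (fun z => f z - g z) 0 = iteratedDeriv n f 0 - iteratedDeriv n g 0 := by
  obtain ⟨p, hp⟩ := hf
  obtain ⟨q, hq⟩ := hg
  have hpq : HasFPowerSeriesAt (fun z => f z - g z) (p - q) 0 := hp.sub hq
  rw [coeff_eq hp, coeff_eq hq, coeff_eq hpq]
  have : (p - q).coeff n = p.coeff n - q.coeff n := rfl
  rw [this]; ring

lemma T_cmul {f : ℂ → ℂ} (hf : AnalyticAt ℂ f 0) (c : ℂ) (n : ℕ) :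
    iteratedDeriv n (fun z => c * f z) 0 = c * iteratedDeriv n f 0 := by
  obtain ⟨p, hp⟩ := hf
  have hcp : HasFPowerSeriesAt (fun z => c * f z) (c • p) 0 := by
    rw [hasFPowerSeriesAt_iff] at hp ⊢
    filter_upwards [hp] with z hz
    have h2 := hz.const_smul c
    have e : (fun n : ℕ => c • (z ^ n • p.coeff n)) = fun n => z ^ n • (c • p).coeff n := by
      funext n
      show c • (z ^ n • p.coeff n) = z ^ n • (c • p.coeff n)
      rw [smul_comm]
    rw [e] at h2
    simpa [smul_eq_mul] using h2
  rw [coeff_eq hp, coeff_eq hcp]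
  have : (c • p).coeff n = c * p.coeff n := rfl
  rw [this]; ring

lemma T_shift {h : ℂ → ℂ} (hh : AnalyticAt ℂ h 0) (k m : ℕ) :
    (m ! : ℂ) * iteratedDeriv (k + m) (fun z => z ^ k * h z) 0
      = ((k + m)! : ℂ) * iteratedDeriv m h 0 := by
  induction k generalizing h with
  | zero => simp
  | succ k ih =>
    have hg : AnalyticAt ℂ (fun z => z ^ k * h z) 0 :=
      ((analyticAt_id.pow k).mul hh)
    have e1 : (fun z : ℂ => z ^ (k+1) * h z) = fun z => z * (z ^ k * h z) := by
      funext z; ring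
    have e2 : (k + 1 + m) = (k + m) + 1 := by ring
    have ha : AnalyticAt ℂ (fun z : ℂ => z * (z ^ k * h z)) 0 := by
      exact analyticAt_id.mul hg
    rw [e1, e2, T_dslope ha, dslope_zmul hg.differentiableAt]
    have h4 := ih hh
    have e3 : ((k + m + 1)! : ℂ) = ((k + m : ℕ) + 1 : ℂ) * ((k + m)! : ℂ) := by
      rw [Nat.factorial_succ]; push_cast; ring
    rw [e3]
    push_cast at h4 ⊢
    linear_combination ((k:ℂ) + m + 1) * h4

lemma T_lt {h : ℂ → ℂ} (hh : AnalyticAt ℂ h 0) {n k : ℕ} (hnk : n < k) :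
    iteratedDeriv n (fun z => z ^ k * h z) 0 = 0 := by
  induction n generalizing h k with
  | zero =>
    simp only [iteratedDeriv_zero]
    rcases Nat.exists_eq_add_of_lt hnk with ⟨j, rfl⟩
    simp [zero_pow]
  | succ n ih =>
    rcases Nat.exists_eq_add_of_lt hnk with ⟨j, rfl⟩
    have hg : AnalyticAt ℂ (fun z => z ^ (n + 1 + j) * h z) 0 :=
      ((analyticAt_id.pow _).mul hh)
    have e1 : (fun z : ℂ => z ^ (n + 1 + j + 1) * h z) = fun z => z * (z ^ (n + 1 + j) * h z) := by
      funext z; ring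
    have ha : AnalyticAt ℂ (fun z : ℂ => z * (z ^ (n + 1 + j) * h z)) 0 := by
      exact analyticAt_id.mul hg
    rw [e1, T_dslope ha, dslope_zmul hg.differentiableAt, ih hh (by omega)]
    ring

lemma T_keq {h : ℂ → ℂ} (hh : AnalyticAt ℂ h 0) (k : ℕ) :
    iteratedDeriv k (fun z => z ^ k * h z) 0 = (k ! : ℂ) * h 0 := by
  have := T_shift hh k 0
  simpa using this

lemma T_ksucc {h : ℂ → ℂ} (hh : AnalyticAt ℂ h 0) (k : ℕ) :
    iteratedDeriv (k + 1) (fun z => z ^ k * h z) 0 = ((k+1)! : ℂ) * deriv h 0 := by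
  have := T_shift hh k 1
  simpa [iteratedDeriv_one] using this


lemma T_shift' {h : ℂ → ℂ} (hh : AnalyticAt ℂ h 0) (k m : ℕ) :
    iteratedDeriv (k + m) (fun z => z ^ k * h z) 0
      = ((k + m)! : ℂ) / (m ! : ℂ) * iteratedDeriv m h 0 := by
  have h1 := T_shift hh k m
  have h2 : (m ! : ℂ) ≠ 0 := by exact_mod_cast Nat.factorial_ne_zero m
  field_simp
  linear_combination h1

lemma T_const (c : ℂ) (n : ℕ) :
    iteratedDeriv n (fun _ : ℂ => c) 0 = if n = 0 then c else 0 := by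
  induction n generalizing c with
  | zero => simp
  | succ n ih =>
    rw [iteratedDeriv_succ']
    simp only [deriv_const']
    rw [ih 0]
    simp

lemma T_zero_pow (h : ℂ → ℂ) (n : ℕ) :
    iteratedDeriv n (fun z : ℂ => z ^ 0 * h z) 0 = iteratedDeriv n h 0 := by
  have : (fun z : ℂ => z ^ 0 * h z) = h := by funext z; simp
  rw [this]

lemma T4 {h1 h2 h3 h4 : ℂ → ℂ} (a1 : AnalyticAt ℂ h1 0) (a2 : AnalyticAt ℂ h2 0)
    (a3 : AnalyticAt ℂ h3 0) (a4 : AnalyticAt ℂ h4 0)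
    (c1 c2 c3 c4 : ℂ) (k1 k2 k3 k4 : ℕ) (n : ℕ) :
    iteratedDeriv n (fun z => c1 * (z ^ k1 * h1 z) + c2 * (z ^ k2 * h2 z)
        + c3 * (z ^ k3 * h3 z) + c4 * (z ^ k4 * h4 z)) 0
      = c1 * iteratedDeriv n (fun z => z ^ k1 * h1 z) 0
        + c2 * iteratedDeriv n (fun z => z ^ k2 * h2 z) 0
        + c3 * iteratedDeriv n (fun z => z ^ k3 * h3 z) 0
        + c4 * iteratedDeriv n (fun z => z ^ k4 * h4 z) 0 := by
  have b1 : AnalyticAt ℂ (fun z => c1 * (z ^ k1 * h1 z)) 0 :=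
    analyticAt_const.mul ((analyticAt_id.pow k1).mul a1)
  have b2 : AnalyticAt ℂ (fun z => c2 * (z ^ k2 * h2 z)) 0 :=
    analyticAt_const.mul ((analyticAt_id.pow k2).mul a2)
  have b3 : AnalyticAt ℂ (fun z => c3 * (z ^ k3 * h3 z)) 0 :=
    analyticAt_const.mul ((analyticAt_id.pow k3).mul a3)
  have b4 : AnalyticAt ℂ (fun z => c4 * (z ^ k4 * h4 z)) 0 :=
    analyticAt_const.mul ((analyticAt_id.pow k4).mul a4)
  rw [T_add (f := fun z => c1 * (z ^ k1 * h1 z) + c2 * (z ^ k2 * h2 z) + c3 * (z ^ k3 * h3 z))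
    (g := fun z => c4 * (z ^ k4 * h4 z)) ((b1.add b2).add b3) b4]
  rw [T_add (f := fun z => c1 * (z ^ k1 * h1 z) + c2 * (z ^ k2 * h2 z))
    (g := fun z => c3 * (z ^ k3 * h3 z)) (b1.add b2) b3]
  rw [T_add (f := fun z => c1 * (z ^ k1 * h1 z)) (g := fun z => c2 * (z ^ k2 * h2 z)) b1 b2]
  rw [T_cmul (f := fun z => z ^ k1 * h1 z) (by exact (analyticAt_id.pow k1).mul a1),
    T_cmul (f := fun z => z ^ k2 * h2 z) (by exact (analyticAt_id.pow k2).mul a2),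
    T_cmul (f := fun z => z ^ k3 * h3 z) (by exact (analyticAt_id.pow k3).mul a3),
    T_cmul (f := fun z => z ^ k4 * h4 z) (by exact (analyticAt_id.pow k4).mul a4)]

lemma iterate_dslope_zero {f : ℂ → ℂ} {p : FormalMultilinearSeries ℂ ℂ ℂ}
    (hp : HasFPowerSeriesAt f p 0) (j : ℕ) :
    ((swap dslope 0)^[j] f) 0 = p.coeff j := by
  have h0 := (hp.has_fpower_series_iterate_dslope_fslope j).coeff_zero 1
  have h1 : (fslope^[j] p).coeff 0 = p.coeff (0 + j) := coeff_iterate_fslope j 0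
  rw [← h0]
  rw [show ((fslope^[j] p) 0) 1 = (fslope^[j] p).coeff 0 from rfl, h1]
  norm_num

lemma iterate_dslope_diffOn {f : ℂ → ℂ} (hf : DifferentiableOn ℂ f unitDisc) (j : ℕ) :
    DifferentiableOn ℂ ((swap dslope 0)^[j] f) unitDisc := by
  induction j with
  | zero => exact hf
  | succ j ih =>
    rw [Function.iterate_succ_apply']
    exact (Complex.differentiableOn_dslope nhds0).mpr ih

lemma factor {f : ℂ → ℂ} (hf : DifferentiableOn ℂ f unitDisc) (k : ℕ)
    (hvan : ∀ n < k, iteratedDeriv n f 0 = 0) :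
    ∃ g : ℂ → ℂ, DifferentiableOn ℂ g unitDisc ∧ ∀ z, f z = z ^ k * g z := by
  obtain ⟨p, hp⟩ := hd_anal hf
  have hc : ∀ n < k, p.coeff n = 0 := by
    intro n hn
    have h1 := coeff_eq hp n
    rw [hvan n hn] at h1
    have h2 : (n ! : ℂ) ≠ 0 := by
      exact_mod_cast Nat.factorial_ne_zero n
    exact (mul_eq_zero.mp h1.symm).resolve_left h2
  refine ⟨(swap dslope 0)^[k] f, iterate_dslope_diffOn hf k, ?_⟩
  induction k with
  | zero => simp
  | succ k ih =>
    intro z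
    have hk : ∀ z, f z = z ^ k * ((swap dslope 0)^[k] f) z :=
      ih (fun n hn => hvan n (by omega)) (fun n hn => hc n (by omega))
    have hzero : ((swap dslope 0)^[k] f) 0 = 0 := by
      rw [iterate_dslope_zero hp k]; exact hc k (by omega)
    have hstep : ∀ z, ((swap dslope 0)^[k] f) z = z * ((swap dslope 0)^[k+1] f) z := by
      intro w
      rcases eq_or_ne w 0 with rfl | hw
      · simp [hzero]
      · rw [Function.iterate_succ_apply', Function.swap]
        rw [dslope_of_ne _ hw, slope_def_field, hzero]
        field_simp; ring
    rw [hk z, hstep z]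
    ring

end CFhelp

namespace CFhelp
open Nat

def tr3 (A : Matrix (Fin 3) (Fin 3) ℂ) : ℂ := A 0 0 + A 1 1 + A 2 2

def e2of (A : Matrix (Fin 3) (Fin 3) ℂ) : ℂ :=
  A 0 0 * A 1 1 - A 0 1 * A 1 0 + A 0 0 * A 2 2 - A 0 2 * A 2 0 + A 1 1 * A 2 2 - A 1 2 * A 2 1

def det3 (A : Matrix (Fin 3) (Fin 3) ℂ) : ℂ :=
  A 0 0 * A 1 1 * A 2 2 - A 0 0 * A 1 2 * A 2 1 - A 0 1 * A 1 0 * A 2 2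
    + A 0 1 * A 1 2 * A 2 0 + A 0 2 * A 1 0 * A 2 1 - A 0 2 * A 1 1 * A 2 0

lemma charpoly3 (A : Matrix (Fin 3) (Fin 3) ℂ) :
    A.charpoly = X ^ 3 - C (tr3 A) * X ^ 2 + C (e2of A) * X - C (det3 A) := by
  rw [Matrix.charpoly, Matrix.det_fin_three]
  simp only [charmatrix_apply_eq, charmatrix_apply_ne _ _ _ (by decide : (0 : Fin 3) ≠ 1),
    charmatrix_apply_ne _ _ _ (by decide : (0 : Fin 3) ≠ 2),
    charmatrix_apply_ne _ _ _ (by decide : (1 : Fin 3) ≠ 0),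
    charmatrix_apply_ne _ _ _ (by decide : (1 : Fin 3) ≠ 2),
    charmatrix_apply_ne _ _ _ (by decide : (2 : Fin 3) ≠ 0),
    charmatrix_apply_ne _ _ _ (by decide : (2 : Fin 3) ≠ 1)]
  simp only [tr3, e2of, det3, C_add, C_sub, C_mul]
  ring

lemma sigma3_0 (A : Matrix (Fin 3) (Fin 3) ℂ) : sigmaCoeff 3 A 0 = tr3 A := by
  rw [sigmaCoeff]
  norm_num [charpoly3 A, coeff_X_pow, Polynomial.coeff_C]

lemma sigma3_1 (A : Matrix (Fin 3) (Fin 3) ℂ) : sigmaCoeff 3 A 1 = e2of A := by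
  rw [sigmaCoeff]
  norm_num [charpoly3 A, coeff_X_pow, Polynomial.coeff_C]

lemma sigma3_2 (A : Matrix (Fin 3) (Fin 3) ℂ) : sigmaCoeff 3 A 2 = det3 A := by
  rw [sigmaCoeff]
  norm_num [charpoly3 A, coeff_X_pow, Polynomial.coeff_C]

lemma charpoly_eq_of_sigma {A B : Matrix (Fin 3) (Fin 3) ℂ}
    (h : sigmaCoeff 3 A = sigmaCoeff 3 B) : A.charpoly = B.charpoly := by
  have h0 := congrFun h 0
  have h1 := congrFun h 1
  have h2 := congrFun h 2
  rw [sigma3_0, sigma3_0] at h0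
  rw [sigma3_1, sigma3_1] at h1
  rw [sigma3_2, sigma3_2] at h2
  rw [charpoly3, charpoly3, h0, h1, h2]

lemma spectrum_charpoly (A : Matrix (Fin 3) (Fin 3) ℂ) {mu : ℂ} :
    mu ∈ spectrum ℂ A ↔ A.charpoly.eval mu = 0 := by
  rw [spectrum.mem_iff, Matrix.isUnit_iff_isUnit_det, isUnit_iff_ne_zero, not_not]
  have hdet : A.charpoly.eval mu = (algebraMap ℂ (Matrix (Fin 3) (Fin 3) ℂ) mu - A).det := by
    rw [Matrix.charpoly]
    rw [show Polynomial.eval mu (Matrix.charmatrix A).det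
        = ((Polynomial.evalRingHom mu).mapMatrix (Matrix.charmatrix A)).det from
      RingHom.map_det (Polynomial.evalRingHom mu) (Matrix.charmatrix A)]
    congr 1
    ext i j
    rcases eq_or_ne i j with rfl | hij
    · simp [Matrix.charmatrix_apply_eq, Matrix.algebraMap_matrix_apply]
    · simp [Matrix.charmatrix_apply_ne _ _ _ hij, Matrix.algebraMap_matrix_apply, hij]
  rw [hdet]

lemma mem_spectralBall_of_sigma {A B : Matrix (Fin 3) (Fin 3) ℂ}
    (hA : A ∈ SpectralBall 3) (h : sigmaCoeff 3 B = sigmaCoeff 3 A) : B ∈ SpectralBall 3 := by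
  intro z hz
  apply hA
  rw [spectrum_charpoly] at hz ⊢
  rwa [charpoly_eq_of_sigma h] at hz

end CFhelp

open CFhelp in
/-- Proposition 10: lifting of the spectral Carathéodory–Fejér
problem on `Ω_3` at `0` with scalar derivative datum `λI`, `λ ≠ 0`. -/
theorem stmt_13 (lam : ℂ) (hlam : lam ≠ 0)
    (φ : ℂ → Fin 3 → ℂ) (hφ : DifferentiableOn ℂ φ unitDisc)
    (hφmaps : Set.MapsTo φ unitDisc (SymPolydisc 3)) (hφ0 : φ 0 = 0) :
    (∃ ψ : ℂ → Matrix (Fin 3) (Fin 3) ℂ, MatHolo ψ ∧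
        Set.MapsTo ψ unitDisc (SpectralBall 3) ∧
        (∀ z ∈ unitDisc, sigmaCoeff 3 (ψ z) = φ z) ∧
        ψ 0 = 0 ∧ (∀ i j : Fin 3, deriv (fun z => ψ z i j) 0 =
          (lam • (1 : Matrix (Fin 3) (Fin 3) ℂ)) i j)) ↔
      (deriv (fun z => φ z 0) 0 = 3 * lam ∧
        deriv (fun z => φ z 1) 0 = 0 ∧
        iteratedDeriv 2 (fun z => φ z 1) 0 / 2 = 3 * lam ^ 2 ∧
        deriv (fun z => φ z 2) 0 = 0 ∧
        iteratedDeriv 2 (fun z => φ z 2) 0 = 0 ∧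
        iteratedDeriv 3 (fun z => φ z 2) 0 / (Nat.factorial 3 : ℂ) = lam ^ 3 ∧
        iteratedDeriv 3 (fun z => φ z 1) 0 / (Nat.factorial 3 : ℂ)
          = lam * iteratedDeriv 2 (fun z => φ z 0) 0 ∧
        iteratedDeriv 4 (fun z => φ z 2) 0 / (Nat.factorial 4 : ℂ)
          = lam ^ 2 * iteratedDeriv 2 (fun z => φ z 0) 0 / 2 ∧
        iteratedDeriv 5 (fun z => φ z 2) 0 / (Nat.factorial 5 : ℂ)
          - lam * iteratedDeriv 4 (fun z => φ z 1) 0 / (Nat.factorial 4 : ℂ)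
          + lam ^ 2 * iteratedDeriv 3 (fun z => φ z 0) 0 / (Nat.factorial 3 : ℂ)
          = 0) := by
  have aone : AnalyticAt ℂ (fun _ : ℂ => (1:ℂ)) 0 := analyticAt_const
  constructor
  · rintro ⟨ψ, hholo, -, hσ, hψ0, hψd⟩
    have hmEx : ∀ i j : Fin 3, ∃ g, DifferentiableOn ℂ g unitDisc ∧
        ∀ z, ψ z i j = lam * (1 : Matrix (Fin 3) (Fin 3) ℂ) i j * z + z ^ 2 * g z := by
      intro i j
      have hdiff : DifferentiableOn ℂ
          (fun z => ψ z i j - lam * (1 : Matrix (Fin 3) (Fin 3) ℂ) i j * z) unitDisc :=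
        (hholo i j).sub (by fun_prop)
      have hvan : ∀ n < 2, iteratedDeriv n
          (fun z => ψ z i j - lam * (1 : Matrix (Fin 3) (Fin 3) ℂ) i j * z) 0 = 0 := by
        intro n hn
        interval_cases n
        · rw [iteratedDeriv_zero, hψ0]; simp
        · rw [iteratedDeriv_one,
            deriv_fun_sub ((hholo i j).differentiableAt nhds0) (by fun_prop), hψd i j]
          have hlin : HasDerivAt (fun z : ℂ => lam * (1 : Matrix (Fin 3) (Fin 3) ℂ) i j * z)
              (lam * (1 : Matrix (Fin 3) (Fin 3) ℂ) i j) 0 := by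
            simpa using (hasDerivAt_id (0:ℂ)).const_mul (lam * (1 : Matrix (Fin 3) (Fin 3) ℂ) i j)
          rw [hlin.deriv]
          simp [Matrix.smul_apply, smul_eq_mul]
      obtain ⟨g, hg, hfac⟩ := factor hdiff 2 hvan
      exact ⟨g, hg, fun z => by linear_combination hfac z⟩
    choose m hmdiff hmfac using hmEx
    set t : ℂ → ℂ := fun z => m 0 0 z + m 1 1 z + m 2 2 z with ht_def
    set s : ℂ → ℂ := fun z => m 0 0 z * m 1 1 z - m 0 1 z * m 1 0 z + m 0 0 z * m 2 2 z
      - m 0 2 z * m 2 0 z + m 1 1 z * m 2 2 z - m 1 2 z * m 2 1 z with hs_def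
    set d : ℂ → ℂ := fun z => m 0 0 z * m 1 1 z * m 2 2 z - m 0 0 z * m 1 2 z * m 2 1 z
      - m 0 1 z * m 1 0 z * m 2 2 z + m 0 1 z * m 1 2 z * m 2 0 z
      + m 0 2 z * m 1 0 z * m 2 1 z - m 0 2 z * m 1 1 z * m 2 0 z with hd_def
    have htd : DifferentiableOn ℂ t unitDisc :=
      ((hmdiff 0 0).add (hmdiff 1 1)).add (hmdiff 2 2)
    have hsd : DifferentiableOn ℂ s unitDisc :=
      ((((((hmdiff 0 0).mul (hmdiff 1 1)).sub ((hmdiff 0 1).mul (hmdiff 1 0))).add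
        ((hmdiff 0 0).mul (hmdiff 2 2))).sub ((hmdiff 0 2).mul (hmdiff 2 0))).add
        ((hmdiff 1 1).mul (hmdiff 2 2))).sub ((hmdiff 1 2).mul (hmdiff 2 1))
    have hdd : DifferentiableOn ℂ d unitDisc :=
      (((((((hmdiff 0 0).mul (hmdiff 1 1)).mul (hmdiff 2 2)).sub
        (((hmdiff 0 0).mul (hmdiff 1 2)).mul (hmdiff 2 1))).sub
        (((hmdiff 0 1).mul (hmdiff 1 0)).mul (hmdiff 2 2))).add
        (((hmdiff 0 1).mul (hmdiff 1 2)).mul (hmdiff 2 0))).add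
        (((hmdiff 0 2).mul (hmdiff 1 0)).mul (hmdiff 2 1))).sub
        (((hmdiff 0 2).mul (hmdiff 1 1)).mul (hmdiff 2 0))
    have hta : AnalyticAt ℂ t 0 := hd_anal htd
    have hsa : AnalyticAt ℂ s 0 := hd_anal hsd
    have hda : AnalyticAt ℂ d 0 := hd_anal hdd
    have hone3 : ∀ i : Fin 3, (1 : Matrix (Fin 3) (Fin 3) ℂ) i i = 1 := fun i => Matrix.one_apply_eq i
    -- the three key identities
    have hkey1 : ∀ z ∈ unitDisc, φ z 0
        = (3*lam) * (z^1 * (fun _ : ℂ => (1:ℂ)) z) + 1 * (z^2 * t z)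
          + 0 * (z^0 * (fun _ : ℂ => (1:ℂ)) z) + 0 * (z^0 * (fun _ : ℂ => (1:ℂ)) z) := by
      intro z hz
      have h0 : φ z 0 = tr3 (ψ z) := by rw [← hσ z hz, sigma3_0]
      rw [h0, tr3, hmfac 0 0, hmfac 1 1, hmfac 2 2, ht_def]
      simp only [Matrix.one_apply_eq]
      ring
    have hkey2 : ∀ z ∈ unitDisc, φ z 1
        = (3*lam^2) * (z^2 * (fun _ : ℂ => (1:ℂ)) z) + (2*lam) * (z^3 * t z)
          + 1 * (z^4 * s z) + 0 * (z^0 * (fun _ : ℂ => (1:ℂ)) z) := by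
      intro z hz
      have h0 : φ z 1 = e2of (ψ z) := by rw [← hσ z hz, sigma3_1]
      rw [h0, e2of, hmfac 0 0, hmfac 0 1, hmfac 0 2, hmfac 1 0, hmfac 1 1, hmfac 1 2,
        hmfac 2 0, hmfac 2 1, hmfac 2 2, ht_def, hs_def]
      simp only [Matrix.one_apply_eq, Matrix.one_apply_ne (by decide : (0:Fin 3) ≠ 1),
        Matrix.one_apply_ne (by decide : (0:Fin 3) ≠ 2),
        Matrix.one_apply_ne (by decide : (1:Fin 3) ≠ 0),
        Matrix.one_apply_ne (by decide : (1:Fin 3) ≠ 2),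
        Matrix.one_apply_ne (by decide : (2:Fin 3) ≠ 0),
        Matrix.one_apply_ne (by decide : (2:Fin 3) ≠ 1)]
      ring
    have hkey3 : ∀ z ∈ unitDisc, φ z 2
        = (lam^3) * (z^3 * (fun _ : ℂ => (1:ℂ)) z) + (lam^2) * (z^4 * t z)
          + lam * (z^5 * s z) + 1 * (z^6 * d z) := by
      intro z hz
      have h0 : φ z 2 = det3 (ψ z) := by rw [← hσ z hz, sigma3_2]
      rw [h0, det3, hmfac 0 0, hmfac 0 1, hmfac 0 2, hmfac 1 0, hmfac 1 1, hmfac 1 2,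
        hmfac 2 0, hmfac 2 1, hmfac 2 2, ht_def, hs_def, hd_def]
      simp only [Matrix.one_apply_eq, Matrix.one_apply_ne (by decide : (0:Fin 3) ≠ 1),
        Matrix.one_apply_ne (by decide : (0:Fin 3) ≠ 2),
        Matrix.one_apply_ne (by decide : (1:Fin 3) ≠ 0),
        Matrix.one_apply_ne (by decide : (1:Fin 3) ≠ 2),
        Matrix.one_apply_ne (by decide : (2:Fin 3) ≠ 0),
        Matrix.one_apply_ne (by decide : (2:Fin 3) ≠ 1)]
      ring
    have hE1 : ∀ n, iteratedDeriv n (fun z => φ z 0) 0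
        = (3*lam) * iteratedDeriv n (fun z => z^1 * (fun _ : ℂ => (1:ℂ)) z) 0
          + 1 * iteratedDeriv n (fun z => z^2 * t z) 0
          + 0 * iteratedDeriv n (fun z => z^0 * (fun _ : ℂ => (1:ℂ)) z) 0
          + 0 * iteratedDeriv n (fun z => z^0 * (fun _ : ℂ => (1:ℂ)) z) 0 := by
      intro n
      rw [Filter.EventuallyEq.iteratedDeriv_eq n
        (Filter.eventually_of_mem nhds0 (fun z hz => hkey1 z hz))]
      exact T4 aone hta aone aone _ _ _ _ _ _ _ _ n
    have hE2 : ∀ n, iteratedDeriv n (fun z => φ z 1) 0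
        = (3*lam^2) * iteratedDeriv n (fun z => z^2 * (fun _ : ℂ => (1:ℂ)) z) 0
          + (2*lam) * iteratedDeriv n (fun z => z^3 * t z) 0
          + 1 * iteratedDeriv n (fun z => z^4 * s z) 0
          + 0 * iteratedDeriv n (fun z => z^0 * (fun _ : ℂ => (1:ℂ)) z) 0 := by
      intro n
      rw [Filter.EventuallyEq.iteratedDeriv_eq n
        (Filter.eventually_of_mem nhds0 (fun z hz => hkey2 z hz))]
      exact T4 aone hta hsa aone _ _ _ _ _ _ _ _ n
    have hE3 : ∀ n, iteratedDeriv n (fun z => φ z 2) 0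
        = (lam^3) * iteratedDeriv n (fun z => z^3 * (fun _ : ℂ => (1:ℂ)) z) 0
          + (lam^2) * iteratedDeriv n (fun z => z^4 * t z) 0
          + lam * iteratedDeriv n (fun z => z^5 * s z) 0
          + 1 * iteratedDeriv n (fun z => z^6 * d z) 0 := by
      intro n
      rw [Filter.EventuallyEq.iteratedDeriv_eq n
        (Filter.eventually_of_mem nhds0 (fun z hz => hkey3 z hz))]
      exact T4 aone hta hsa hda _ _ _ _ _ _ _ _ n
    -- building-block values
    have Tzk : ∀ (h : ℂ → ℂ), AnalyticAt ℂ h 0 → ∀ k n : ℕ,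
        iteratedDeriv n (fun z : ℂ => z^k * h z) 0
        = if n < k then 0
          else (Nat.factorial n : ℂ) / (Nat.factorial (n-k) : ℂ) * iteratedDeriv (n-k) h 0 := by
      intro h hh k n
      rcases lt_or_ge n k with hlt | hge
      · rw [if_pos hlt]; exact T_lt hh hlt
      · rw [if_neg (by omega)]
        have hkn : k + (n - k) = n := by omega
        have := T_shift' hh k (n - k)
        rw [hkn] at this
        exact this
    refine ⟨?_, ?_, ?_, ?_, ?_, ?_, ?_, ?_, ?_⟩
    · rw [← iteratedDeriv_one, hE1 1, Tzk _ aone 1 1, Tzk _ hta 2 1, Tzk _ aone 0 1]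
      norm_num [T_const, iteratedDeriv_zero, Nat.factorial]
    · rw [← iteratedDeriv_one, hE2 1, Tzk _ aone 2 1, Tzk _ hta 3 1, Tzk _ hsa 4 1,
        Tzk _ aone 0 1]
      norm_num [T_const, iteratedDeriv_zero, Nat.factorial]
    · rw [hE2 2, Tzk _ aone 2 2, Tzk _ hta 3 2, Tzk _ hsa 4 2, Tzk _ aone 0 2]
      norm_num [T_const, iteratedDeriv_zero, Nat.factorial]
    · rw [← iteratedDeriv_one, hE3 1, Tzk _ aone 3 1, Tzk _ hta 4 1, Tzk _ hsa 5 1,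
        Tzk _ hda 6 1]
      norm_num [T_const, iteratedDeriv_zero, Nat.factorial]
    · rw [hE3 2, Tzk _ aone 3 2, Tzk _ hta 4 2, Tzk _ hsa 5 2, Tzk _ hda 6 2]
      norm_num [T_const, iteratedDeriv_zero, Nat.factorial]
    · rw [hE3 3, Tzk _ aone 3 3, Tzk _ hta 4 3, Tzk _ hsa 5 3, Tzk _ hda 6 3]
      norm_num [T_const, iteratedDeriv_zero, Nat.factorial]
    · rw [hE2 3, hE1 2, Tzk _ aone 2 3, Tzk _ hta 3 3, Tzk _ hsa 4 3, Tzk _ aone 0 3,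
        Tzk _ aone 1 2, Tzk _ hta 2 2]
      norm_num [T_const, iteratedDeriv_zero, Nat.factorial]
      ring
    · rw [hE3 4, hE1 2, Tzk _ aone 3 4, Tzk _ hta 4 4, Tzk _ hsa 5 4, Tzk _ hda 6 4,
        Tzk _ aone 1 2, Tzk _ hta 2 2]
      norm_num [T_const, iteratedDeriv_zero, Nat.factorial]
      ring
    · rw [hE3 5, hE2 4, hE1 3, Tzk _ aone 3 5, Tzk _ hta 4 5, Tzk _ hsa 5 5, Tzk _ hda 6 5,
        Tzk _ aone 2 4, Tzk _ hta 3 4, Tzk _ hsa 4 4, Tzk _ aone 0 4,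
        Tzk _ aone 1 3, Tzk _ hta 2 3]
      norm_num [T_const, iteratedDeriv_zero, Nat.factorial]
      ring
  · rintro ⟨c1, c2, c3, c4, c5, c6, c7, c8, c9⟩
    norm_num [Nat.factorial] at c3 c6 c7 c8 c9
    have hφd : ∀ i : Fin 3, DifferentiableOn ℂ (fun z => φ z i) unitDisc := by
      intro i z hz
      exact ((ContinuousLinearMap.proj i : (Fin 3 → ℂ) →L[ℂ] ℂ).differentiableAt).comp_differentiableWithinAt z (hφ z hz)
    have hφa : ∀ i : Fin 3, AnalyticAt ℂ (fun z => φ z i) 0 := fun i => hd_anal (hφd i)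
    have hφ00 : φ 0 0 = 0 := by rw [hφ0]; rfl
    have hφ01 : φ 0 1 = 0 := by rw [hφ0]; rfl
    have hφ02 : φ 0 2 = 0 := by rw [hφ0]; rfl
    have Tzk : ∀ (h : ℂ → ℂ), AnalyticAt ℂ h 0 → ∀ k n : ℕ,
        iteratedDeriv n (fun z : ℂ => z^k * h z) 0
        = if n < k then 0
          else (Nat.factorial n : ℂ) / (Nat.factorial (n-k) : ℂ) * iteratedDeriv (n-k) h 0 := by
      intro h hh k n
      rcases lt_or_ge n k with hlt | hge
      · rw [if_pos hlt]; exact T_lt hh hlt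
      · rw [if_neg (by omega)]
        have hkn : k + (n - k) = n := by omega
        have := T_shift' hh k (n - k)
        rw [hkn] at this
        exact this
    -- factor φ₁ - 3λz = z²t
    have hu1diff : DifferentiableOn ℂ (fun z : ℂ => 1 * (z^0 * φ z 0)
        + (-(3*lam)) * (z^1 * (fun _ : ℂ => (1:ℂ)) z) + 0 * (z^0 * (fun _ : ℂ => (1:ℂ)) z)
        + 0 * (z^0 * (fun _ : ℂ => (1:ℂ)) z)) unitDisc := by
      apply DifferentiableOn.add
      apply DifferentiableOn.add
      apply DifferentiableOn.add
      · exact (((differentiable_pow 0).differentiableOn).mul (hφd 0)).const_mul 1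
      · exact (((differentiable_pow 1).differentiableOn).mul
          (differentiable_const (1:ℂ)).differentiableOn).const_mul _
      · exact (((differentiable_pow 0).differentiableOn).mul
          (differentiable_const (1:ℂ)).differentiableOn).const_mul _
      · exact (((differentiable_pow 0).differentiableOn).mul
          (differentiable_const (1:ℂ)).differentiableOn).const_mul _
    have hu1van : ∀ n < 2, iteratedDeriv n (fun z : ℂ => 1 * (z^0 * φ z 0)
        + (-(3*lam)) * (z^1 * (fun _ : ℂ => (1:ℂ)) z) + 0 * (z^0 * (fun _ : ℂ => (1:ℂ)) z)
        + 0 * (z^0 * (fun _ : ℂ => (1:ℂ)) z)) 0 = 0 := by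
      intro n hn
      interval_cases n
      · rw [iteratedDeriv_zero]; simp [hφ00]
      · rw [T4 (hφa 0) aone aone aone _ _ _ _ _ _ _ _ 1, Tzk _ (hφa 0) 0 1, Tzk _ aone 1 1,
          Tzk _ aone 0 1]
        norm_num [T_const, iteratedDeriv_zero, Nat.factorial]
        linear_combination c1
    obtain ⟨t, htd, hfac1⟩ := factor hu1diff 2 hu1van
    -- factor φ₂ - 2λzφ₁ + 3λ²z² = z⁴s
    have hu2diff : DifferentiableOn ℂ (fun z : ℂ => 1 * (z^0 * φ z 1)
        + (-(2*lam)) * (z^1 * φ z 0) + (3*lam^2) * (z^2 * (fun _ : ℂ => (1:ℂ)) z)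
        + 0 * (z^0 * (fun _ : ℂ => (1:ℂ)) z)) unitDisc := by
      apply DifferentiableOn.add
      apply DifferentiableOn.add
      apply DifferentiableOn.add
      · exact (((differentiable_pow 0).differentiableOn).mul (hφd 1)).const_mul 1
      · exact (((differentiable_pow 1).differentiableOn).mul (hφd 0)).const_mul _
      · exact (((differentiable_pow 2).differentiableOn).mul
          (differentiable_const (1:ℂ)).differentiableOn).const_mul _
      · exact (((differentiable_pow 0).differentiableOn).mul
          (differentiable_const (1:ℂ)).differentiableOn).const_mul _
    have hu2van : ∀ n < 4, iteratedDeriv n (fun z : ℂ => 1 * (z^0 * φ z 1)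
        + (-(2*lam)) * (z^1 * φ z 0) + (3*lam^2) * (z^2 * (fun _ : ℂ => (1:ℂ)) z)
        + 0 * (z^0 * (fun _ : ℂ => (1:ℂ)) z)) 0 = 0 := by
      intro n hn
      interval_cases n
      · rw [iteratedDeriv_zero]; simp [hφ01]
      · rw [T4 (hφa 1) (hφa 0) aone aone _ _ _ _ _ _ _ _ 1, Tzk _ (hφa 1) 0 1,
          Tzk _ (hφa 0) 1 1, Tzk _ aone 2 1, Tzk _ aone 0 1]
        norm_num [T_const, iteratedDeriv_zero, Nat.factorial, hφ00]
        linear_combination c2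
      · rw [T4 (hφa 1) (hφa 0) aone aone _ _ _ _ _ _ _ _ 2, Tzk _ (hφa 1) 0 2,
          Tzk _ (hφa 0) 1 2, Tzk _ aone 2 2, Tzk _ aone 0 2]
        norm_num [T_const, iteratedDeriv_zero, Nat.factorial, hφ00]
        linear_combination 2 * c3 - 4 * lam * c1
      · rw [T4 (hφa 1) (hφa 0) aone aone _ _ _ _ _ _ _ _ 3, Tzk _ (hφa 1) 0 3,
          Tzk _ (hφa 0) 1 3, Tzk _ aone 2 3, Tzk _ aone 0 3]
        norm_num [T_const, iteratedDeriv_zero, Nat.factorial, hφ00]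
        linear_combination 6 * c7
    obtain ⟨s, hsd, hfac2⟩ := factor hu2diff 4 hu2van
    -- factor φ₃ - λzφ₂ + λ²z²φ₁ - λ³z³ = z⁶d
    have hu3diff : DifferentiableOn ℂ (fun z : ℂ => 1 * (z^0 * φ z 2)
        + (-lam) * (z^1 * φ z 1) + (lam^2) * (z^2 * φ z 0)
        + (-(lam^3)) * (z^3 * (fun _ : ℂ => (1:ℂ)) z)) unitDisc := by
      apply DifferentiableOn.add
      apply DifferentiableOn.add
      apply DifferentiableOn.add
      · exact (((differentiable_pow 0).differentiableOn).mul (hφd 2)).const_mul 1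
      · exact (((differentiable_pow 1).differentiableOn).mul (hφd 1)).const_mul _
      · exact (((differentiable_pow 2).differentiableOn).mul (hφd 0)).const_mul _
      · exact (((differentiable_pow 3).differentiableOn).mul
          (differentiable_const (1:ℂ)).differentiableOn).const_mul _
    have hu3van : ∀ n < 6, iteratedDeriv n (fun z : ℂ => 1 * (z^0 * φ z 2)
        + (-lam) * (z^1 * φ z 1) + (lam^2) * (z^2 * φ z 0)
        + (-(lam^3)) * (z^3 * (fun _ : ℂ => (1:ℂ)) z)) 0 = 0 := by
      intro n hn
      interval_cases n
      · rw [iteratedDeriv_zero]; simp [hφ02]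
      · rw [T4 (hφa 2) (hφa 1) (hφa 0) aone _ _ _ _ _ _ _ _ 1, Tzk _ (hφa 2) 0 1,
          Tzk _ (hφa 1) 1 1, Tzk _ (hφa 0) 2 1, Tzk _ aone 3 1]
        norm_num [T_const, iteratedDeriv_zero, Nat.factorial, hφ00, hφ01]
        linear_combination c4
      · rw [T4 (hφa 2) (hφa 1) (hφa 0) aone _ _ _ _ _ _ _ _ 2, Tzk _ (hφa 2) 0 2,
          Tzk _ (hφa 1) 1 2, Tzk _ (hφa 0) 2 2, Tzk _ aone 3 2]
        norm_num [T_const, iteratedDeriv_zero, Nat.factorial, hφ00, hφ01]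
        linear_combination c5 - 2 * lam * c2
      · rw [T4 (hφa 2) (hφa 1) (hφa 0) aone _ _ _ _ _ _ _ _ 3, Tzk _ (hφa 2) 0 3,
          Tzk _ (hφa 1) 1 3, Tzk _ (hφa 0) 2 3, Tzk _ aone 3 3]
        norm_num [T_const, iteratedDeriv_zero, Nat.factorial, hφ00, hφ01]
        linear_combination 6 * c6 - 6 * lam * c3 + 6 * lam^2 * c1
      · rw [T4 (hφa 2) (hφa 1) (hφa 0) aone _ _ _ _ _ _ _ _ 4, Tzk _ (hφa 2) 0 4,
          Tzk _ (hφa 1) 1 4, Tzk _ (hφa 0) 2 4, Tzk _ aone 3 4]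
        norm_num [T_const, iteratedDeriv_zero, Nat.factorial, hφ00, hφ01]
        linear_combination 24 * c8 - 24 * lam * c7
      · rw [T4 (hφa 2) (hφa 1) (hφa 0) aone _ _ _ _ _ _ _ _ 5, Tzk _ (hφa 2) 0 5,
          Tzk _ (hφa 1) 1 5, Tzk _ (hφa 0) 2 5, Tzk _ aone 3 5]
        norm_num [T_const, iteratedDeriv_zero, Nat.factorial, hφ00, hφ01]
        linear_combination 120 * c9
    obtain ⟨d, hdd, hfac3⟩ := factor hu3diff 6 hu3van
    -- construct the lifting
    have hdT : DifferentiableAt ℂ t 0 := (htd.differentiableAt nhds0)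
    have hdS : DifferentiableAt ℂ s 0 := (hsd.differentiableAt nhds0)
    have hdD : DifferentiableAt ℂ d 0 := (hdd.differentiableAt nhds0)
    have dz2 : ∀ (g : ℂ → ℂ), DifferentiableAt ℂ g 0 → deriv (fun z : ℂ => z^2 * g z) 0 = 0 := by
      intro g hg
      have := ((hasDerivAt_pow 2 (0:ℂ)).mul hg.hasDerivAt).deriv
      simpa [Pi.mul_def] using this
    have dlin : deriv (fun z : ℂ => lam * z) 0 = lam := by
      simpa using ((hasDerivAt_id (0:ℂ)).const_mul lam).deriv
    have R : ∀ i j : Fin 3, (lam • (1 : Matrix (Fin 3) (Fin 3) ℂ)) i j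
        = if i = j then lam else 0 := by
      intro i j
      by_cases h : i = j <;> simp [Matrix.one_apply, h]
    have hσψ : ∀ z : ℂ, sigmaCoeff 3 (Matrix.of ![![lam*z, 0, z^2 * d z],
        ![z^2, lam*z, -(z^2 * s z)], ![0, z^2, lam*z + z^2 * t z]]) = φ z := by
      intro z
      funext i
      fin_cases i
      · rw [show (⟨0, by omega⟩ : Fin 3) = 0 from rfl, sigma3_0]
        show lam*z + lam*z + (lam*z + z^2 * t z) = φ z 0
        linear_combination -(hfac1 z)
      · rw [show (⟨1, by omega⟩ : Fin 3) = 1 from rfl, sigma3_1]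
        show (lam*z) * (lam*z) - 0 * z^2 + (lam*z) * (lam*z + z^2 * t z) - (z^2 * d z) * 0
          + (lam*z) * (lam*z + z^2 * t z) - (-(z^2 * s z)) * z^2 = φ z 1
        linear_combination -(hfac2 z) - 2*lam*z*(hfac1 z)
      · rw [show (⟨2, by omega⟩ : Fin 3) = 2 from rfl, sigma3_2]
        show (lam*z) * (lam*z) * (lam*z + z^2 * t z) - (lam*z) * (-(z^2 * s z)) * z^2
          - 0 * z^2 * (lam*z + z^2 * t z) + 0 * (-(z^2 * s z)) * 0
          + (z^2 * d z) * z^2 * z^2 - (z^2 * d z) * (lam*z) * 0 = φ z 2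
        linear_combination -(hfac3 z) - lam*z*(hfac2 z) - lam^2*z^2*(hfac1 z)
    refine ⟨fun z => Matrix.of ![![lam*z, 0, z^2 * d z],
      ![z^2, lam*z, -(z^2 * s z)], ![0, z^2, lam*z + z^2 * t z]], ?_, ?_, ?_, ?_, ?_⟩
    · intro i j
      fin_cases i <;> fin_cases j
      · exact (differentiable_id.const_mul lam).differentiableOn
      · exact (differentiable_const 0).differentiableOn
      · exact ((differentiable_pow 2).differentiableOn).mul hdd
      · exact (differentiable_pow 2).differentiableOn
      · exact (differentiable_id.const_mul lam).differentiableOn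
      · exact (((differentiable_pow 2).differentiableOn).mul hsd).neg
      · exact (differentiable_const 0).differentiableOn
      · exact (differentiable_pow 2).differentiableOn
      · exact ((differentiable_id.const_mul lam).differentiableOn).add
          (((differentiable_pow 2).differentiableOn).mul htd)
    · intro z hz
      obtain ⟨A, hA, hAs⟩ := hφmaps hz
      exact mem_spectralBall_of_sigma hA (by rw [hσψ z, ← hAs])
    · exact fun z _ => hσψ z
    · ext i j
      fin_cases i <;> fin_cases j <;>
        simp [Matrix.zero_apply, Matrix.vecHead, Matrix.vecTail]
    · intro i j
      fin_cases i <;> fin_cases j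
      · show deriv (fun z : ℂ => lam * z) 0 = _
        rw [dlin]; simp [R, Fin.ext_iff]
      · show deriv (fun _ : ℂ => (0:ℂ)) 0 = _
        rw [deriv_const]; simp [R, Fin.ext_iff]
      · show deriv (fun z : ℂ => z^2 * d z) 0 = _
        rw [dz2 d hdD]; simp [R, Fin.ext_iff]
      · show deriv (fun z : ℂ => z^2) 0 = _
        simp [R, Fin.ext_iff]
      · show deriv (fun z : ℂ => lam * z) 0 = _
        rw [dlin]; simp [R, Fin.ext_iff]
      · show deriv (fun z : ℂ => -(z^2 * s z)) 0 = _
        rw [deriv.fun_neg, dz2 s hdS]; simp [R, Fin.ext_iff]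
      · show deriv (fun _ : ℂ => (0:ℂ)) 0 = _
        rw [deriv_const]; simp [R, Fin.ext_iff]
      · show deriv (fun z : ℂ => z^2) 0 = _
        simp [R, Fin.ext_iff]
      · show deriv (fun z : ℂ => lam * z + z^2 * t z) 0 = _
        have hd1 : DifferentiableAt ℂ (fun z : ℂ => lam * z) 0 := by
          exact (differentiable_id.const_mul lam).differentiableAt
        have hd2 : DifferentiableAt ℂ (fun z : ℂ => z^2 * t z) 0 := by
          exact ((differentiable_pow 2).differentiableAt).mul hdT
        rw [deriv_fun_add hd1 hd2, dlin, dz2 t hdT]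
        simp [R, Fin.ext_iff]
end
end
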